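/- arXiv:1512.00405 — 7 statements merged into one kernel-verified Lean document; each statement's English description precedes it below -/
import Mathlib

section
/- For the Manhart relative normalizations with support functions ⁽ᵅ⁾q = |K|^α (α ∈ ℝ), the associated tangent field satisfies ⁽ᵅ⁾Q̄ = α·T̄_EUK, and the corresponding Tchebychev vector satisfies ⁽ᵅ⁾T̄ = |K|^α·(1 − α(n+2))·T̄_EUK. In particular ⁽ᵅ⁾T̄ = 0 identically for the equiaffine choice α = 1/(n+2). -/
/-- Partial derivative of a scalar function on `ℝⁿ`. -/
noncomputable def pd {n : ℕ} (f : EuclideanSpace ℝ (Fin n) → ℝ) (i : Fin n)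
    (u : EuclideanSpace ℝ (Fin n)) : ℝ :=
  fderiv ℝ f u (EuclideanSpace.single i 1)

/-- Partial derivative of a vector-valued function on `ℝⁿ`. -/
noncomputable def pdv {n m : ℕ}
    (f : EuclideanSpace ℝ (Fin n) → EuclideanSpace ℝ (Fin m)) (i : Fin n)
    (u : EuclideanSpace ℝ (Fin n)) : EuclideanSpace ℝ (Fin m) :=
  fderiv ℝ f u (EuclideanSpace.single i 1)

/-- The III-gradient tangent vector `∇^{III}(f, ξ̄) = −h^{ij} f_{/i} x̄_{/j}`
(expressed via the Weingarten equations). -/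
noncomputable def gradIII {n : ℕ}
    (hinv : EuclideanSpace ℝ (Fin n) → Matrix (Fin n) (Fin n) ℝ)
    (x : EuclideanSpace ℝ (Fin n) → EuclideanSpace ℝ (Fin (n + 1)))
    (f : EuclideanSpace ℝ (Fin n) → ℝ) (u : EuclideanSpace ℝ (Fin n)) :
    EuclideanSpace ℝ (Fin (n + 1)) :=
  -(∑ i, ∑ j, (hinv u i j * pd f i u) • pdv x j u)

/-- Derivative of `t ↦ |t|^α` at a nonzero point. -/
lemma my_hasDerivAt_abs_rpow (α : ℝ) {c : ℝ} (hc : c ≠ 0) :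
    HasDerivAt (fun t : ℝ => |t| ^ α) (α * |c| ^ α / c) c := by
  rcases hc.lt_or_gt with h | h
  · have hneg : HasDerivAt (fun t : ℝ => -t) (-1) c := (hasDerivAt_id c).neg
    have h1 : HasDerivAt (fun t : ℝ => (-t) ^ α) (α * (-c) ^ (α - 1) * (-1)) c :=
      (Real.hasDerivAt_rpow_const (p := α) (Or.inl (by linarith))).comp c hneg
    have heq : (fun t : ℝ => |t| ^ α) =ᶠ[nhds c] (fun t : ℝ => (-t) ^ α) := by
      filter_upwards [eventually_lt_nhds h] with t ht
      rw [abs_of_neg ht]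
    have hval : α * |c| ^ α / c = α * (-c) ^ (α - 1) * (-1) := by
      rw [abs_of_neg h]
      have h2 : (-c) ^ α = (-c) ^ (α - 1) * (-c) := by
        rw [← Real.rpow_add_one (by linarith : (-c) ≠ 0)]; ring_nf
      rw [h2]; field_simp
    rw [hval]
    exact h1.congr_of_eventuallyEq heq
  · have h1 : HasDerivAt (fun t : ℝ => t ^ α) (α * c ^ (α - 1)) c :=
      Real.hasDerivAt_rpow_const (Or.inl (ne_of_gt h))
    have heq : (fun t : ℝ => |t| ^ α) =ᶠ[nhds c] (fun t : ℝ => t ^ α) := by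
      filter_upwards [eventually_gt_nhds h] with t ht
      rw [abs_of_pos ht]
    have hval : α * |c| ^ α / c = α * c ^ (α - 1) := by
      rw [abs_of_pos h]
      have h2 : c ^ α = c ^ (α - 1) * c := by
        rw [← Real.rpow_add_one (ne_of_gt h)]; ring_nf
      rw [h2, ← mul_assoc, mul_div_assoc, div_self (ne_of_gt h), mul_one]
    rw [hval]
    exact h1.congr_of_eventuallyEq heq

/-- for the Manhart normalizations with support functions
`⁽ᵅ⁾q = |K|^α`, the tangent field satisfies `⁽ᵅ⁾Q̄ = α·T̄_EUK`, the Tchebychev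
field satisfies `⁽ᵅ⁾T̄ = |K|^α·(1 − α(n+2))·T̄_EUK`, and in particular
`⁽ᵅ⁾T̄ = 0` for the equiaffine choice `α = 1/(n+2)`. -/
theorem manhart_normalization_tchebychev {n : ℕ} (hn : 0 < n)
    (U : Set (EuclideanSpace ℝ (Fin n))) (hUo : IsOpen U)
    (x : EuclideanSpace ℝ (Fin n) → EuclideanSpace ℝ (Fin (n + 1)))
    (hinv : EuclideanSpace ℝ (Fin n) → Matrix (Fin n) (Fin n) ℝ)
    (K : EuclideanSpace ℝ (Fin n) → ℝ)
    (hK : ContDiffOn ℝ 1 K U) (hK0 : ∀ u ∈ U, K u ≠ 0) (α : ℝ)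
    (TEUK Qa Ta : EuclideanSpace ℝ (Fin n) → EuclideanSpace ℝ (Fin (n + 1)))
    (hTEUK : ∀ u ∈ U, TEUK u = (1 / (2 * (n : ℝ) * K u)) • gradIII hinv x K u)
    (hQa : ∀ u ∈ U, Qa u = (1 / (2 * (n : ℝ) * |K u| ^ α)) •
        gradIII hinv x (fun v => |K v| ^ α) u)
    (hTa : ∀ u ∈ U, Ta u = (|K u| ^ α) • TEUK u
        - (|K u| ^ α * ((n : ℝ) + 2)) • Qa u) :
    ∀ u ∈ U, Qa u = α • TEUK u ∧
      Ta u = (|K u| ^ α * (1 - α * ((n : ℝ) + 2))) • TEUK u ∧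
      (α = 1 / ((n : ℝ) + 2) → Ta u = 0) := by
  intro u hu
  have hKu : K u ≠ 0 := hK0 u hu
  have habs : |K u| ^ α ≠ 0 := by
    have : (0:ℝ) < |K u| := abs_pos.mpr hKu
    positivity
  have hdK : DifferentiableAt ℝ K u :=
    (hK.contDiffAt (hUo.mem_nhds hu)).differentiableAt one_ne_zero
  set c : ℝ := α * |K u| ^ α / K u with hc
  have hfd : HasFDerivAt (fun v => |K v| ^ α) (c • fderiv ℝ K u) u :=
    (my_hasDerivAt_abs_rpow α hKu).comp_hasFDerivAt u hdK.hasFDerivAt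
  have hpd : ∀ i, pd (fun v => |K v| ^ α) i u = c * pd K i u := by
    intro i
    unfold pd
    rw [hfd.fderiv]
    simp
  have hgrad : gradIII hinv x (fun v => |K v| ^ α) u = c • gradIII hinv x K u := by
    unfold gradIII
    simp only [hpd]
    rw [smul_neg]
    congr 1
    rw [Finset.smul_sum]
    refine Finset.sum_congr rfl fun i _ => ?_
    rw [Finset.smul_sum]
    refine Finset.sum_congr rfl fun j _ => ?_
    rw [smul_smul]
    ring_nf
  have hn' : (n : ℝ) ≠ 0 := Nat.cast_ne_zero.mpr hn.ne'
  have hQ : Qa u = α • TEUK u := by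
    rw [hQa u hu, hTEUK u hu, hgrad, smul_smul, smul_smul]
    congr 1
    rw [hc]
    field_simp
  refine ⟨hQ, ?_, ?_⟩
  · rw [hTa u hu, hQ, smul_smul, ← sub_smul]
    congr 1; ring
  · intro hα
    rw [hTa u hu, hQ, smul_smul, ← sub_smul]
    have hne : ((n:ℝ) + 2) ≠ 0 := by positivity
    have h0 : |K u| ^ α - |K u| ^ α * ((n:ℝ)+2) * α = 0 := by
      rw [hα]; field_simp; ring
    rw [h0, zero_smul]
end

section
/- Suppose q₂ = λ·q₁^α for constants α ∈ ℝ, λ ≠ 0, with q₁ nowhere zero. Then the relative normalizations satisfy ȳ₂ = λ·q₁^{α−1}·[ȳ₁ + (α−1)·∇^{III}(q₁, ξ̄)] and the Tchebychev fields satisfy T̄₂ = λ·q₁^{α−1}·[T̄₁ − ((α−1)(n+2)/(2n))·∇^{III}(q₁, ξ̄)]. -/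
/-- Relative normalization `ȳ = ∇^{III}(q, ξ̄) + q ξ̄` of support function `q`. -/
noncomputable def relNor {n : ℕ}
    (hinv : EuclideanSpace ℝ (Fin n) → Matrix (Fin n) (Fin n) ℝ)
    (x ξ : EuclideanSpace ℝ (Fin n) → EuclideanSpace ℝ (Fin (n + 1)))
    (q : EuclideanSpace ℝ (Fin n) → ℝ) (u : EuclideanSpace ℝ (Fin n)) :
    EuclideanSpace ℝ (Fin (n + 1)) :=
  gradIII hinv x q u + q u • ξ u

/-- Tchebychev field `T̄ = q·T̄_EUK − ((n+2)/(2n))·∇^{III}(q, ξ̄)` of support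
function `q`, where `T̄_EUK = (1/(2nK))·∇^{III}(K, ξ̄)`. -/
noncomputable def tcheb {n : ℕ}
    (hinv : EuclideanSpace ℝ (Fin n) → Matrix (Fin n) (Fin n) ℝ)
    (x : EuclideanSpace ℝ (Fin n) → EuclideanSpace ℝ (Fin (n + 1)))
    (K q : EuclideanSpace ℝ (Fin n) → ℝ) (u : EuclideanSpace ℝ (Fin n)) :
    EuclideanSpace ℝ (Fin (n + 1)) :=
  (q u / (2 * (n : ℝ) * K u)) • gradIII hinv x K u
    - (((n : ℝ) + 2) / (2 * (n : ℝ))) • gradIII hinv x q u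

lemma myHasDerivAt_abs_rpow (α : ℝ) {t : ℝ} (ht : t ≠ 0) :
    HasDerivAt (fun s : ℝ => |s| ^ α) (α * |t| ^ α / t) t := by
  rcases ht.lt_or_gt with h | h
  · have h0 : (0:ℝ) < -t := by linarith
    have h1 : HasDerivAt (fun s : ℝ => (-s) ^ α) ((α * (-t) ^ (α - 1)) * (-1)) t :=
      (Real.hasDerivAt_rpow_const (p := α) (Or.inl (neg_ne_zero.mpr ht))).comp t
        (hasDerivAt_neg t)
    have heq : (fun s : ℝ => (-s) ^ α) =ᶠ[nhds t] fun s : ℝ => |s| ^ α := by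
      filter_upwards [Iio_mem_nhds h] with s hs
      rw [abs_of_neg hs]
    have := h1.congr_of_eventuallyEq heq.symm
    refine this.congr_deriv (Eq.symm ?_)
    rw [abs_of_neg h, Real.rpow_sub h0, Real.rpow_one]
    field_simp
  · have h1 : HasDerivAt (fun s : ℝ => s ^ α) (α * t ^ (α - 1)) t :=
      Real.hasDerivAt_rpow_const (p := α) (Or.inl ht)
    have heq : (fun s : ℝ => s ^ α) =ᶠ[nhds t] fun s : ℝ => |s| ^ α := by
      filter_upwards [Ioi_mem_nhds h] with s hs
      rw [abs_of_pos hs]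
    have := h1.congr_of_eventuallyEq heq.symm
    refine this.congr_deriv (Eq.symm ?_)
    rw [abs_of_pos h, Real.rpow_sub h, Real.rpow_one]
    field_simp

/-- if `q₂ = λ·q₁^α` (sign-consistent power `λ·|q₁|^α`) with
`λ ≠ 0` and `q₁` nowhere zero, then
`ȳ₂ = λ·q₁^{α−1}·[ȳ₁ + (α−1)·∇^{III}(q₁, ξ̄)]` and
`T̄₂ = λ·q₁^{α−1}·[T̄₁ − ((α−1)(n+2)/(2n))·∇^{III}(q₁, ξ̄)]`, where
`λ·q₁^{α−1} = λ·|q₁|^α / q₁`. -/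
theorem power_related_normalizations {n : ℕ} (hn : 0 < n)
    (U : Set (EuclideanSpace ℝ (Fin n))) (hUo : IsOpen U)
    (x ξ : EuclideanSpace ℝ (Fin n) → EuclideanSpace ℝ (Fin (n + 1)))
    (hinv : EuclideanSpace ℝ (Fin n) → Matrix (Fin n) (Fin n) ℝ)
    (K q₁ q₂ : EuclideanSpace ℝ (Fin n) → ℝ)
    (hK : ContDiffOn ℝ 1 K U) (hK0 : ∀ u ∈ U, K u ≠ 0)
    (hq₁ : ContDiffOn ℝ 1 q₁ U) (hq₁0 : ∀ u ∈ U, q₁ u ≠ 0)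
    (l α : ℝ) (hl : l ≠ 0)
    (hq₂ : ∀ u ∈ U, q₂ u = l * |q₁ u| ^ α) :
    ∀ u ∈ U,
      relNor hinv x ξ q₂ u = (l * |q₁ u| ^ α / q₁ u) •
        (relNor hinv x ξ q₁ u + (α - 1) • gradIII hinv x q₁ u) ∧
      tcheb hinv x K q₂ u = (l * |q₁ u| ^ α / q₁ u) •
        (tcheb hinv x K q₁ u
          - ((α - 1) * ((n : ℝ) + 2) / (2 * (n : ℝ))) • gradIII hinv x q₁ u) := by
  intro u hu
  have hq1u := hq₁0 u hu
  have hKu := hK0 u hu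
  have hnn : (n : ℝ) ≠ 0 := Nat.cast_ne_zero.mpr hn.ne'
  have hq1d : HasFDerivAt q₁ (fderiv ℝ q₁ u) u :=
    (((hq₁.contDiffAt (hUo.mem_nhds hu)).differentiableAt one_ne_zero).hasFDerivAt)
  have hcomp : HasFDerivAt (fun v => l * |q₁ v| ^ α)
      ((l * (α * |q₁ u| ^ α / q₁ u)) • fderiv ℝ q₁ u) u := by
    have h1 := (myHasDerivAt_abs_rpow α hq1u).comp_hasFDerivAt u hq1d
    have h2 := h1.const_mul l
    simpa [smul_smul] using h2
  have h2 : HasFDerivAt q₂ ((l * (α * |q₁ u| ^ α / q₁ u)) • fderiv ℝ q₁ u) u := by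
    apply hcomp.congr_of_eventuallyEq
    filter_upwards [hUo.mem_nhds hu] with v hv
    exact hq₂ v hv
  have hfd : fderiv ℝ q₂ u = (l * (α * |q₁ u| ^ α / q₁ u)) • fderiv ℝ q₁ u := h2.fderiv
  have hpd : ∀ i, pd q₂ i u = (l * (α * |q₁ u| ^ α / q₁ u)) * pd q₁ i u := by
    intro i
    simp [pd, hfd]
  have hgrad : gradIII hinv x q₂ u
      = (l * (α * |q₁ u| ^ α / q₁ u)) • gradIII hinv x q₁ u := by
    simp only [gradIII, hpd, smul_neg, Finset.smul_sum, smul_smul]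
    congr 1
    refine Finset.sum_congr rfl fun i _ => Finset.sum_congr rfl fun j _ => ?_
    congr 1
    ring
  refine ⟨?_, ?_⟩
  · rw [relNor, relNor, hgrad, hq₂ u hu]
    match_scalars <;> field_simp <;> ring
  · rw [tcheb, tcheb, hgrad, hq₂ u hu]
    match_scalars <;> field_simp <;> ring
end

section
/- With q_AFF := |K|^{1/(n+2)} and ȳ_AFF the corresponding (equiaffine) relative normalization, the following are equivalent for two relative normalizations with support functions q₁, q₂ and Tchebychev fields T̄₁, T̄₂: (a) T̄₂ = α·T̄₁ for some constant α; (b) |q₂ − α q₁| = λ·q_AFF for some constant λ ≥ 0; (c) ȳ₂ = α·ȳ₁ + μ·ȳ_AFF for some constant μ. -/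
open scoped RealInnerProductSpace

/-- A function with vanishing derivative on an open preconnected set is constant. -/
lemma aux_const_of_hasFDerivAt_zero {E : Type*} [NormedAddCommGroup E] [NormedSpace ℝ E]
    {f : E → ℝ} {U : Set E} (hUo : IsOpen U) (hUc : IsPreconnected U)
    (hf : ∀ u ∈ U, HasFDerivAt f (0 : E →L[ℝ] ℝ) u)
    {u v : E} (hu : u ∈ U) (hv : v ∈ U) : f u = f v := by
  have hloc : ∀ w ∈ U, ∃ ε > 0, Metric.ball w ε ⊆ U ∧ ∀ z ∈ Metric.ball w ε, f z = f w := by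
    intro w hw
    obtain ⟨ε, hε, hball⟩ := Metric.isOpen_iff.1 hUo w hw
    refine ⟨ε, hε, hball, fun z hz => ?_⟩
    refine (convex_ball w ε).is_const_of_fderivWithin_eq_zero
      (fun y hy => ((hf y (hball hy)).differentiableAt).differentiableWithinAt)
      (fun y hy => ?_) hz (Metric.mem_ball_self hε)
    rw [fderivWithin_of_isOpen Metric.isOpen_ball hy, (hf y (hball hy)).fderiv]
  by_contra hne
  set S := {w | w ∈ U ∧ f w = f u} with hS
  set T := {w | w ∈ U ∧ f w ≠ f u} with hT
  have hSo : IsOpen S := by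
    rw [Metric.isOpen_iff]
    rintro w ⟨hwU, hwf⟩
    obtain ⟨ε, hε, hbU, hconst⟩ := hloc w hwU
    exact ⟨ε, hε, fun z hz => ⟨hbU hz, (hconst z hz).trans hwf⟩⟩
  have hTo : IsOpen T := by
    rw [Metric.isOpen_iff]
    rintro w ⟨hwU, hwf⟩
    obtain ⟨ε, hε, hbU, hconst⟩ := hloc w hwU
    exact ⟨ε, hε, fun z hz => ⟨hbU hz, (hconst z hz).symm ▸ hwf⟩⟩
  obtain ⟨w, _, hwS, hwT⟩ := hUc S T hSo hTo
    (fun w hw => by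
      by_cases hfw : f w = f u
      · exact Or.inl ⟨hw, hfw⟩
      · exact Or.inr ⟨hw, hfw⟩)
    ⟨u, hu, hu, rfl⟩ ⟨v, hv, hv, fun hh => hne hh.symm⟩
  exact hwT.2 hwS.2

/-- A nonvanishing continuous function on a preconnected set has constant sign. -/
lemma aux_sign_const {E : Type*} [TopologicalSpace E]
    {f : E → ℝ} {U : Set E} (hUc : IsPreconnected U)
    (hf : ContinuousOn f U) (h0 : ∀ u ∈ U, f u ≠ 0) {u v : E} (hu : u ∈ U) (hv : v ∈ U)
    (hpos : 0 < f u) : 0 < f v := by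
  by_contra hneg
  obtain ⟨w, hw, hw0⟩ := hUc.intermediate_value hv hu hf ⟨le_of_not_gt hneg, le_of_lt hpos⟩
  exact h0 w hw hw0

lemma gradIII_eq {n : ℕ}
    (hinv : EuclideanSpace ℝ (Fin n) → Matrix (Fin n) (Fin n) ℝ)
    (x : EuclideanSpace ℝ (Fin n) → EuclideanSpace ℝ (Fin (n + 1)))
    (f : EuclideanSpace ℝ (Fin n) → ℝ) (u : EuclideanSpace ℝ (Fin n)) :
    gradIII hinv x f u = ∑ j, (-(∑ i, hinv u i j * pd f i u)) • pdv x j u := by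
  unfold gradIII
  rw [Finset.sum_comm]
  simp [Finset.sum_smul, neg_smul]

lemma tcheb_diff_decomp {n : ℕ}
    (hinv : EuclideanSpace ℝ (Fin n) → Matrix (Fin n) (Fin n) ℝ)
    (x : EuclideanSpace ℝ (Fin n) → EuclideanSpace ℝ (Fin (n + 1)))
    (K q₁ q₂ : EuclideanSpace ℝ (Fin n) → ℝ) (α : ℝ) (u : EuclideanSpace ℝ (Fin n)) :
    tcheb hinv x K q₂ u - α • tcheb hinv x K q₁ u
      = ∑ j, (∑ i, (-((q₂ u - α * q₁ u) / (2 * (n:ℝ) * K u)) * pd K i u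
          + (((n:ℝ) + 2) / (2 * (n:ℝ))) * pd q₂ i u
          - α * ((((n:ℝ) + 2) / (2 * (n:ℝ))) * pd q₁ i u)) * hinv u i j)
          • pdv x j u := by
  unfold tcheb
  rw [gradIII_eq, gradIII_eq, gradIII_eq]
  simp only [Finset.smul_sum, smul_smul, smul_sub, ← Finset.sum_sub_distrib]
  refine Finset.sum_congr rfl fun j _ => ?_
  simp only [← sub_smul]
  congr 1
  simp only [mul_neg, neg_mul, Finset.mul_sum, add_mul, sub_mul,
    ← Finset.sum_neg_distrib, ← Finset.sum_sub_distrib, ← Finset.sum_add_distrib]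
  refine Finset.sum_congr rfl fun i _ => ?_
  ring

lemma gradIII_lin {n : ℕ}
    (hinv : EuclideanSpace ℝ (Fin n) → Matrix (Fin n) (Fin n) ℝ)
    (x : EuclideanSpace ℝ (Fin n) → EuclideanSpace ℝ (Fin (n + 1)))
    (f g k : EuclideanSpace ℝ (Fin n) → ℝ) (α c : ℝ) (u : EuclideanSpace ℝ (Fin n))
    (hpd : ∀ i, pd f i u = α * pd g i u + c * pd k i u) :
    gradIII hinv x f u = α • gradIII hinv x g u + c • gradIII hinv x k u := by
  simp only [gradIII, smul_neg, ← neg_add, Finset.smul_sum, smul_smul,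
    ← Finset.sum_add_distrib]
  congr 1
  refine Finset.sum_congr rfl fun i _ => Finset.sum_congr rfl fun j _ => ?_
  rw [hpd, ← add_smul]
  congr 1
  ring

lemma inner_relNor {n : ℕ}
    (hinv : EuclideanSpace ℝ (Fin n) → Matrix (Fin n) (Fin n) ℝ)
    (x ξ : EuclideanSpace ℝ (Fin n) → EuclideanSpace ℝ (Fin (n + 1)))
    (f : EuclideanSpace ℝ (Fin n) → ℝ) (u : EuclideanSpace ℝ (Fin n))
    (hξo : ∀ i, ⟪ξ u, pdv x i u⟫ = 0) (hξn : ‖ξ u‖ = 1) :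
    ⟪relNor hinv x ξ f u, ξ u⟫ = f u := by
  rw [relNor, inner_add_left, gradIII_eq, sum_inner]
  have h1 : ∀ j ∈ Finset.univ, (⟪(-(∑ i, hinv u i j * pd f i u)) • pdv x j u, ξ u⟫ : ℝ) = 0 := by
    intro j _
    rw [real_inner_smul_left, real_inner_comm, hξo j, mul_zero]
  rw [Finset.sum_eq_zero h1, real_inner_smul_left, real_inner_self_eq_norm_sq, hξn]
  norm_num

set_option maxHeartbeats 1600000 in
/-- with `q_AFF := |K|^{1/(n+2)}` and `ȳ_AFF` the equiaffine
normalization, for two relative normalizations with nowhere-zero support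
functions `q₁, q₂` the following are equivalent on a connected domain:
(a) `T̄₂ = α·T̄₁` for some constant `α`; (b) `|q₂ − αq₁| = λ·q_AFF` for some
`λ ≥ 0`; (c) `ȳ₂ = α·ȳ₁ + μ·ȳ_AFF` for some constant `μ`. -/
theorem tchebychev_proportional_iff {n : ℕ} (hn : 0 < n)
    (U : Set (EuclideanSpace ℝ (Fin n))) (hUo : IsOpen U) (hUc : IsConnected U)
    (x ξ : EuclideanSpace ℝ (Fin n) → EuclideanSpace ℝ (Fin (n + 1)))
    (hinv h : EuclideanSpace ℝ (Fin n) → Matrix (Fin n) (Fin n) ℝ)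
    (K q₁ q₂ : EuclideanSpace ℝ (Fin n) → ℝ)
    (hind : ∀ u ∈ U, LinearIndependent ℝ (fun j : Fin n => pdv x j u))
    (hξo : ∀ u ∈ U, ∀ i, ⟪ξ u, pdv x i u⟫ = 0)
    (hξn : ∀ u ∈ U, ‖ξ u‖ = 1)
    (hhinv : ∀ u ∈ U, h u * hinv u = 1)
    (hK : ContDiffOn ℝ 1 K U) (hK0 : ∀ u ∈ U, K u ≠ 0)
    (hq₁ : ContDiffOn ℝ 1 q₁ U) (hq₁0 : ∀ u ∈ U, q₁ u ≠ 0)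
    (hq₂ : ContDiffOn ℝ 1 q₂ U) (hq₂0 : ∀ u ∈ U, q₂ u ≠ 0)
    (α : ℝ) :
    ((∀ u ∈ U, tcheb hinv x K q₂ u = α • tcheb hinv x K q₁ u) ↔
        ∃ l : ℝ, 0 ≤ l ∧ ∀ u ∈ U,
          |q₂ u - α * q₁ u| = l * |K u| ^ (1 / ((n : ℝ) + 2))) ∧
      ((∀ u ∈ U, tcheb hinv x K q₂ u = α • tcheb hinv x K q₁ u) ↔
        ∃ μ : ℝ, ∀ u ∈ U, relNor hinv x ξ q₂ u
          = α • relNor hinv x ξ q₁ u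
            + μ • relNor hinv x ξ (fun v => |K v| ^ (1 / ((n : ℝ) + 2))) u) := by
  classical
  obtain ⟨u₀, hu₀⟩ := hUc.nonempty
  set p : ℝ := 1 / ((n : ℝ) + 2) with hp
  have hnpos : (0:ℝ) < (n:ℝ) := by exact_mod_cast hn
  have hn2 : ((n:ℝ) + 2) ≠ 0 := by positivity
  have h2n : (2 * (n:ℝ)) ≠ 0 := by positivity
  have hpn : p * ((n:ℝ) + 2) = 1 := by rw [hp]; field_simp
  -- constant sign of K
  obtain ⟨ε, hε1, hεK⟩ : ∃ ε : ℝ, (ε = 1 ∨ ε = -1) ∧ ∀ u ∈ U, 0 < ε * K u := by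
    rcases (hK0 u₀ hu₀).lt_or_gt with hneg | hpos
    · refine ⟨-1, Or.inr rfl, fun u hu => ?_⟩
      have := aux_sign_const hUc.isPreconnected (hK.continuousOn.neg)
        (fun w hw => neg_ne_zero.mpr (hK0 w hw)) hu₀ hu (by simpa using hneg)
      simpa using this
    · refine ⟨1, Or.inl rfl, fun u hu => ?_⟩
      have := aux_sign_const hUc.isPreconnected hK.continuousOn hK0 hu₀ hu hpos
      simpa using this
  have habs : ∀ u ∈ U, |K u| = ε * K u := by
    intro u hu
    rcases hε1 with rfl | rfl
    · have : 0 < K u := by simpa using hεK u hu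
      simp [abs_of_pos this]
    · have : K u < 0 := by have := hεK u hu; nlinarith
      simp [abs_of_neg this]
  -- differentiability
  have hKd : ∀ u ∈ U, DifferentiableAt ℝ K u :=
    fun u hu => (hK.differentiableOn one_ne_zero).differentiableAt (hUo.mem_nhds hu)
  have hq1d : ∀ u ∈ U, DifferentiableAt ℝ q₁ u :=
    fun u hu => (hq₁.differentiableOn one_ne_zero).differentiableAt (hUo.mem_nhds hu)
  have hq2d : ∀ u ∈ U, DifferentiableAt ℝ q₂ u :=
    fun u hu => (hq₂.differentiableOn one_ne_zero).differentiableAt (hUo.mem_nhds hu)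
  -- derivative of (ε K)^p
  have hqaD : ∀ u ∈ U, HasFDerivAt (fun v => (ε * K v) ^ p)
      ((p * (ε * K u) ^ (p - 1)) • (ε • fderiv ℝ K u)) u := by
    intro u hu
    exact (((hKd u hu).hasFDerivAt).const_mul ε).rpow_const (Or.inl (hεK u hu).ne')
  have hqaEq : ∀ u ∈ U, (fun v => |K v| ^ p) =ᶠ[nhds u] (fun v => (ε * K v) ^ p) := by
    intro u hu
    filter_upwards [hUo.mem_nhds hu] with v hv
    rw [habs v hv]
  have hqaD' : ∀ u ∈ U, HasFDerivAt (fun v => |K v| ^ p)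
      ((p * (ε * K u) ^ (p - 1)) • (ε • fderiv ℝ K u)) u :=
    fun u hu => (hqaD u hu).congr_of_eventuallyEq (hqaEq u hu)
  have hpdqa : ∀ u ∈ U, ∀ i, pd (fun v => |K v| ^ p) i u
      = p * (ε * K u) ^ (p - 1) * (ε * pd K i u) := by
    intro u hu i
    rw [pd, (hqaD' u hu).fderiv]
    simp [pd, mul_assoc]
  -- the componentwise PDE
  set A : Prop := ∀ u ∈ U, tcheb hinv x K q₂ u = α • tcheb hinv x K q₁ u with hA
  set Acomp : Prop := ∀ u ∈ U, ∀ i, (q₂ u - α * q₁ u) * pd K i u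
      = ((n:ℝ) + 2) * K u * (pd q₂ i u - α * pd q₁ i u) with hAcomp
  set P : Prop := ∃ c : ℝ, ∀ u ∈ U, q₂ u - α * q₁ u = c * |K u| ^ p with hP
  -- step 1 : A ↔ Acomp
  have step1 : A ↔ Acomp := by
    constructor
    · intro hAh u hu i
      have h0 : tcheb hinv x K q₂ u - α • tcheb hinv x K q₁ u = 0 := by
        rw [hAh u hu]; simp
      rw [tcheb_diff_decomp] at h0
      have hcoef := Fintype.linearIndependent_iff.mp (hind u hu) _ h0
      have hvm : Matrix.vecMul (fun i => -((q₂ u - α * q₁ u) / (2 * (n:ℝ) * K u)) * pd K i u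
          + (((n:ℝ) + 2) / (2 * (n:ℝ))) * pd q₂ i u
          - α * ((((n:ℝ) + 2) / (2 * (n:ℝ))) * pd q₁ i u)) (hinv u) = 0 := by
        funext j
        have := hcoef j
        simpa [Matrix.vecMul, dotProduct] using this
      have hvv0 : (fun i => -((q₂ u - α * q₁ u) / (2 * (n:ℝ) * K u)) * pd K i u
          + (((n:ℝ) + 2) / (2 * (n:ℝ))) * pd q₂ i u
          - α * ((((n:ℝ) + 2) / (2 * (n:ℝ))) * pd q₁ i u)) = (0 : Fin n → ℝ) := by
        have hBA : hinv u * h u = 1 := mul_eq_one_comm.mp (hhinv u hu)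
        have h1 : (fun i => -((q₂ u - α * q₁ u) / (2 * (n:ℝ) * K u)) * pd K i u
            + (((n:ℝ) + 2) / (2 * (n:ℝ))) * pd q₂ i u
            - α * ((((n:ℝ) + 2) / (2 * (n:ℝ))) * pd q₁ i u))
            = Matrix.vecMul (fun i => -((q₂ u - α * q₁ u) / (2 * (n:ℝ) * K u)) * pd K i u
            + (((n:ℝ) + 2) / (2 * (n:ℝ))) * pd q₂ i u
            - α * ((((n:ℝ) + 2) / (2 * (n:ℝ))) * pd q₁ i u)) (hinv u * h u) := by
          rw [hBA, Matrix.vecMul_one]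
        rw [h1, ← Matrix.vecMul_vecMul, hvm, Matrix.zero_vecMul]
      have hvi : -((q₂ u - α * q₁ u) / (2 * (n:ℝ) * K u)) * pd K i u
          + (((n:ℝ) + 2) / (2 * (n:ℝ))) * pd q₂ i u
          - α * ((((n:ℝ) + 2) / (2 * (n:ℝ))) * pd q₁ i u) = 0 := congrFun hvv0 i
      have hKne := hK0 u hu
      have h2nK : 2 * (n:ℝ) * K u ≠ 0 := mul_ne_zero h2n hKne
      have hfac : -((q₂ u - α * q₁ u) / (2 * (n:ℝ) * K u)) * pd K i u
          + (((n:ℝ) + 2) / (2 * (n:ℝ))) * pd q₂ i u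
          - α * ((((n:ℝ) + 2) / (2 * (n:ℝ))) * pd q₁ i u)
          = (1 / (2 * (n:ℝ) * K u)) * (((n:ℝ) + 2) * K u * (pd q₂ i u - α * pd q₁ i u)
              - (q₂ u - α * q₁ u) * pd K i u) := by
        field_simp
        ring
      rw [hfac] at hvi
      rcases mul_eq_zero.mp hvi with hbad | hgood
      · exact absurd hbad (one_div_ne_zero h2nK)
      · linarith
    · intro hAc u hu
      have h0 : tcheb hinv x K q₂ u - α • tcheb hinv x K q₁ u = 0 := by
        rw [tcheb_diff_decomp]
        refine Finset.sum_eq_zero fun j _ => ?_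
        have hz : ∀ i, (-((q₂ u - α * q₁ u) / (2 * (n:ℝ) * K u)) * pd K i u
            + (((n:ℝ) + 2) / (2 * (n:ℝ))) * pd q₂ i u
            - α * ((((n:ℝ) + 2) / (2 * (n:ℝ))) * pd q₁ i u)) = 0 := by
          intro i
          have hAci := hAc u hu i
          have hKne := hK0 u hu
          have h2nK : 2 * (n:ℝ) * K u ≠ 0 := mul_ne_zero h2n hKne
          have hfac : -((q₂ u - α * q₁ u) / (2 * (n:ℝ) * K u)) * pd K i u
              + (((n:ℝ) + 2) / (2 * (n:ℝ))) * pd q₂ i u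
              - α * ((((n:ℝ) + 2) / (2 * (n:ℝ))) * pd q₁ i u)
              = (1 / (2 * (n:ℝ) * K u)) * (((n:ℝ) + 2) * K u * (pd q₂ i u - α * pd q₁ i u)
                  - (q₂ u - α * q₁ u) * pd K i u) := by
            field_simp
            ring
          rw [hfac, ← hAci, sub_self, mul_zero]
        rw [Finset.sum_eq_zero fun i _ => by rw [hz i, zero_mul], zero_smul]
      have := sub_eq_zero.mp h0
      exact this
  -- step 2 : Acomp ↔ P
  have step2 : Acomp ↔ P := by
    constructor
    · intro hAc
      have hFd : ∀ u ∈ U, HasFDerivAt (fun v => (q₂ v - α * q₁ v) * (ε * K v) ^ (-p))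
          (0 : EuclideanSpace ℝ (Fin n) →L[ℝ] ℝ) u := by
        intro u hu
        have hq : HasFDerivAt (fun v => q₂ v - α * q₁ v)
            (fderiv ℝ q₂ u - α • fderiv ℝ q₁ u) u :=
          ((hq2d u hu).hasFDerivAt).sub (((hq1d u hu).hasFDerivAt).const_mul α)
        have hg : HasFDerivAt (fun v => (ε * K v) ^ (-p))
            ((-p * (ε * K u) ^ (-p - 1)) • (ε • fderiv ℝ K u)) u :=
          (((hKd u hu).hasFDerivAt).const_mul ε).rpow_const (Or.inl (hεK u hu).ne')
        have hmul := hq.mul hg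
        have hzero : (q₂ u - α * q₁ u) • ((-p * (ε * K u) ^ (-p - 1)) • (ε • fderiv ℝ K u))
            + ((ε * K u) ^ (-p)) • (fderiv ℝ q₂ u - α • fderiv ℝ q₁ u)
            = (0 : EuclideanSpace ℝ (Fin n) →L[ℝ] ℝ) := by
          apply ContinuousLinearMap.coe_injective
          refine Module.Basis.ext (EuclideanSpace.basisFun (Fin n) ℝ).toBasis fun i => ?_
          have hKpos := hεK u hu
          have hrp : (ε * K u) ^ (-p - 1) = (ε * K u) ^ (-p) / (ε * K u) := by
            rw [Real.rpow_sub hKpos, Real.rpow_one]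
          have hAci := hAc u hu i
          simp only [OrthonormalBasis.coe_toBasis, EuclideanSpace.basisFun_apply,
            ContinuousLinearMap.coe_coe,
            ContinuousLinearMap.add_apply, ContinuousLinearMap.smul_apply,
            ContinuousLinearMap.sub_apply, ContinuousLinearMap.zero_apply,
            LinearMap.zero_apply, smul_eq_mul]
          show (q₂ u - α * q₁ u) * (-p * (ε * K u) ^ (-p - 1) * (ε * fderiv ℝ K u (EuclideanSpace.single i 1)))
            + (ε * K u) ^ (-p) * (fderiv ℝ q₂ u (EuclideanSpace.single i 1)
              - α * fderiv ℝ q₁ u (EuclideanSpace.single i 1)) = 0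
          have e1 : fderiv ℝ K u (EuclideanSpace.single i 1) = pd K i u := rfl
          have e2 : fderiv ℝ q₂ u (EuclideanSpace.single i 1) = pd q₂ i u := rfl
          have e3 : fderiv ℝ q₁ u (EuclideanSpace.single i 1) = pd q₁ i u := rfl
          rw [e1, e2, e3, hrp]
          have hne : ε * K u ≠ 0 := hKpos.ne'
          calc (q₂ u - α * q₁ u) * (-p * ((ε * K u) ^ (-p) / (ε * K u)) * (ε * pd K i u))
              + (ε * K u) ^ (-p) * (pd q₂ i u - α * pd q₁ i u)
              = -p * ε * ((q₂ u - α * q₁ u) * pd K i u) * (ε * K u) ^ (-p) / (ε * K u)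
                + (ε * K u) ^ (-p) * (pd q₂ i u - α * pd q₁ i u) := by ring
            _ = -p * ε * (((n:ℝ) + 2) * K u * (pd q₂ i u - α * pd q₁ i u)) * (ε * K u) ^ (-p)
                  / (ε * K u)
                + (ε * K u) ^ (-p) * (pd q₂ i u - α * pd q₁ i u) := by rw [hAci]
            _ = (1 - p * ((n:ℝ) + 2) * ((ε * K u) / (ε * K u)))
                * ((ε * K u) ^ (-p) * (pd q₂ i u - α * pd q₁ i u)) := by ring
            _ = 0 := by rw [div_self hne, hpn]; ring
        rw [← hzero]
        exact hmul
      have hconst : ∀ u ∈ U, (q₂ u - α * q₁ u) * (ε * K u) ^ (-p)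
          = (q₂ u₀ - α * q₁ u₀) * (ε * K u₀) ^ (-p) :=
        fun u hu => aux_const_of_hasFDerivAt_zero hUo hUc.isPreconnected hFd hu hu₀
      refine ⟨(q₂ u₀ - α * q₁ u₀) * (ε * K u₀) ^ (-p), fun u hu => ?_⟩
      have hKpos := hεK u hu
      have hcancel : (ε * K u) ^ (-p) * (ε * K u) ^ p = 1 := by
        rw [← Real.rpow_add hKpos]
        norm_num
      have h5 : (q₂ u - α * q₁ u) * ((ε * K u) ^ (-p) * (ε * K u) ^ p)
          = (q₂ u₀ - α * q₁ u₀) * (ε * K u₀) ^ (-p) * (ε * K u) ^ p := by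
        rw [← mul_assoc, hconst u hu]
      rw [hcancel, mul_one] at h5
      rw [h5, habs u hu]
    · rintro ⟨c, hc⟩ u hu i
      -- q₂ - α q₁ = c (εK)^p on U; compute derivatives
      have hKpos := hεK u hu
      have hrhs : HasFDerivAt (fun v => α * q₁ v + c * (ε * K v) ^ p)
          (α • fderiv ℝ q₁ u + c • ((p * (ε * K u) ^ (p - 1)) • (ε • fderiv ℝ K u))) u :=
        (((hq1d u hu).hasFDerivAt).const_mul α).add ((hqaD u hu).const_mul c)
      have heq : q₂ =ᶠ[nhds u] (fun v => α * q₁ v + c * (ε * K v) ^ p) := by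
        filter_upwards [hUo.mem_nhds hu] with v hv
        have := hc v hv
        rw [habs v hv] at this
        linarith
      have hq2' : HasFDerivAt q₂
          (α • fderiv ℝ q₁ u + c • ((p * (ε * K u) ^ (p - 1)) • (ε • fderiv ℝ K u))) u :=
        hrhs.congr_of_eventuallyEq heq
      have hpd2 : pd q₂ i u = α * pd q₁ i u + c * (p * (ε * K u) ^ (p - 1) * (ε * pd K i u)) := by
        rw [pd, hq2'.fderiv]
        simp [pd, mul_assoc]
      have hqu : q₂ u - α * q₁ u = c * (ε * K u) ^ p := by
        rw [hc u hu, habs u hu]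
      rw [hqu, hpd2]
      have hrp : (ε * K u) ^ (p - 1) = (ε * K u) ^ p / (ε * K u) := by
        rw [Real.rpow_sub hKpos, Real.rpow_one]
      rw [hrp]
      have hne : ε * K u ≠ 0 := hKpos.ne'
      have hfin : ((n:ℝ) + 2) * K u * ((α * pd q₁ i u
            + c * (p * ((ε * K u) ^ p / (ε * K u)) * (ε * pd K i u))) - α * pd q₁ i u)
          = (p * ((n:ℝ) + 2)) * (c * (ε * K u) ^ p * pd K i u) * ((ε * K u) / (ε * K u)) := by
        ring
      rw [hfin, div_self hne, hpn, one_mul, mul_one]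
  -- step 3 : P ↔ (b)
  have step3 : P ↔ ∃ l : ℝ, 0 ≤ l ∧ ∀ u ∈ U, |q₂ u - α * q₁ u| = l * |K u| ^ p := by
    constructor
    · rintro ⟨c, hc⟩
      refine ⟨|c|, abs_nonneg c, fun u hu => ?_⟩
      rw [hc u hu, abs_mul, abs_of_nonneg (Real.rpow_nonneg (abs_nonneg (K u)) p)]
    · rintro ⟨l, hl0, hl⟩
      rcases eq_or_lt_of_le hl0 with hl0' | hlpos
      · refine ⟨0, fun u hu => ?_⟩
        have := hl u hu
        rw [← hl0', zero_mul, abs_eq_zero] at this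
        rw [this, zero_mul]
      · have hgc : ContinuousOn (fun v => q₂ v - α * q₁ v) U :=
          hq₂.continuousOn.sub (continuousOn_const.mul hq₁.continuousOn)
        have hgne : ∀ u ∈ U, q₂ u - α * q₁ u ≠ 0 := by
          intro u hu hzero
          have h6 := hl u hu
          rw [hzero, abs_zero] at h6
          have hKp : 0 < |K u| ^ p := Real.rpow_pos_of_pos (abs_pos.mpr (hK0 u hu)) p
          nlinarith
        rcases (hgne u₀ hu₀).lt_or_gt with hneg | hpos
        · refine ⟨-l, fun u hu => ?_⟩
          have hgu : q₂ u - α * q₁ u < 0 := by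
            have h7 : (0:ℝ) < (fun v => -(q₂ v - α * q₁ v)) u :=
              aux_sign_const hUc.isPreconnected hgc.neg
                (fun w hw => neg_ne_zero.mpr (hgne w hw)) hu₀ hu (by simpa using hneg)
            simpa using h7
          have h6 := hl u hu
          rw [abs_of_neg hgu] at h6
          linarith
        · refine ⟨l, fun u hu => ?_⟩
          have hgu : (0:ℝ) < (fun v => q₂ v - α * q₁ v) u :=
            aux_sign_const hUc.isPreconnected hgc hgne hu₀ hu hpos
          have h6 := hl u hu
          rw [abs_of_pos hgu] at h6
          exact h6
  -- step 4 : P ↔ (c)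
  have step4 : P ↔ ∃ μ : ℝ, ∀ u ∈ U, relNor hinv x ξ q₂ u
      = α • relNor hinv x ξ q₁ u + μ • relNor hinv x ξ (fun v => |K v| ^ p) u := by
    constructor
    · rintro ⟨c, hc⟩
      refine ⟨c, fun u hu => ?_⟩
      have hKpos := hεK u hu
      have hrhs : HasFDerivAt (fun v => α * q₁ v + c * (ε * K v) ^ p)
          (α • fderiv ℝ q₁ u + c • ((p * (ε * K u) ^ (p - 1)) • (ε • fderiv ℝ K u))) u :=
        (((hq1d u hu).hasFDerivAt).const_mul α).add ((hqaD u hu).const_mul c)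
      have heq : q₂ =ᶠ[nhds u] (fun v => α * q₁ v + c * (ε * K v) ^ p) := by
        filter_upwards [hUo.mem_nhds hu] with v hv
        have := hc v hv
        rw [habs v hv] at this
        linarith
      have hq2' : HasFDerivAt q₂
          (α • fderiv ℝ q₁ u + c • ((p * (ε * K u) ^ (p - 1)) • (ε • fderiv ℝ K u))) u :=
        hrhs.congr_of_eventuallyEq heq
      have hpd2 : ∀ i, pd q₂ i u = α * pd q₁ i u + c * pd (fun v => |K v| ^ p) i u := by
        intro i
        rw [hpdqa u hu i, pd, hq2'.fderiv]
        simp [pd, mul_assoc]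
      have hgr := gradIII_lin hinv x q₂ q₁ (fun v => |K v| ^ p) α c u hpd2
      have hval : q₂ u = α * q₁ u + c * |K u| ^ p := by
        have := hc u hu; linarith
      rw [relNor, relNor, relNor, hgr, hval]
      rw [add_smul, smul_add, smul_add, mul_smul, mul_smul]
      abel
    · rintro ⟨μ, hμ⟩
      refine ⟨μ, fun u hu => ?_⟩
      have h2 := congrArg (fun w => (⟪w, ξ u⟫ : ℝ)) (hμ u hu)
      simp only [inner_add_left, real_inner_smul_left] at h2
      rw [inner_relNor hinv x ξ q₂ u (hξo u hu) (hξn u hu),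
        inner_relNor hinv x ξ q₁ u (hξo u hu) (hξn u hu),
        inner_relNor hinv x ξ (fun v => |K v| ^ p) u (hξo u hu) (hξn u hu)] at h2
      linarith
  exact ⟨step1.trans (step2.trans step3), step1.trans (step2.trans step4)⟩
end

section
/- Given a relative normalization ȳ₁ with support function q₁ on a hypersurface with K ≠ 0, every member of the one-parameter family ȳ = ȳ₁ + μ·ȳ_AFF (μ ∈ ℝ with μ ≠ −q₁·q_AFF^{-1} pointwise, so that the resulting support function q₁ + μ q_AFF is nowhere zero) is a relative normalization whose Tchebychev vector field equals T̄₁, the Tchebychev field of ȳ₁. -/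
open scoped RealInnerProductSpace

open scoped RealInnerProductSpace

private lemma hasDerivAt_abs_rpow'' (p : ℝ) {t : ℝ} (ht : t ≠ 0) :
    HasDerivAt (fun s : ℝ => |s| ^ p) (p * |t| ^ p / t) t := by
  rcases ht.lt_or_gt with h | h
  · have h1 : HasDerivAt (fun s : ℝ => (-s) ^ p) (p * (-t) ^ (p - 1) * (-1)) t :=
      (Real.hasDerivAt_rpow_const (p := p) (Or.inl (neg_ne_zero.mpr ht))).comp t
        (hasDerivAt_neg t)
    have h2 : (fun s : ℝ => (-s) ^ p) =ᶠ[nhds t] fun s => |s| ^ p := by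
      filter_upwards [Iio_mem_nhds h] with s hs
      rw [abs_of_neg hs]
    have h3 := h1.congr_of_eventuallyEq h2.symm
    refine h3.congr_deriv ?_
    rw [abs_of_neg h, Real.rpow_sub (by linarith), Real.rpow_one]
    field_simp
  · have h1 : HasDerivAt (fun s : ℝ => s ^ p) (p * t ^ (p - 1)) t :=
      Real.hasDerivAt_rpow_const (Or.inl ht)
    have h2 : (fun s : ℝ => s ^ p) =ᶠ[nhds t] fun s => |s| ^ p := by
      filter_upwards [Ioi_mem_nhds h] with s hs
      rw [abs_of_pos hs]
    have h3 := h1.congr_of_eventuallyEq h2.symm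
    refine h3.congr_deriv ?_
    rw [abs_of_pos h, Real.rpow_sub h, Real.rpow_one]
    field_simp

private lemma gradIII_split {n : ℕ}
    (hinv : EuclideanSpace ℝ (Fin n) → Matrix (Fin n) (Fin n) ℝ)
    (x : EuclideanSpace ℝ (Fin n) → EuclideanSpace ℝ (Fin (n + 1)))
    (f g h : EuclideanSpace ℝ (Fin n) → ℝ) (u : EuclideanSpace ℝ (Fin n))
    (μ : ℝ) (hf : ∀ i, pd f i u = pd g i u + μ * pd h i u) :
    gradIII hinv x f u = gradIII hinv x g u + μ • gradIII hinv x h u := by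
  simp only [gradIII, hf, smul_neg, ← neg_add]
  congr 1
  rw [Finset.smul_sum, ← Finset.sum_add_distrib]
  refine Finset.sum_congr rfl fun i _ => ?_
  rw [Finset.smul_sum, ← Finset.sum_add_distrib]
  refine Finset.sum_congr rfl fun j _ => ?_
  rw [mul_add, add_smul, smul_smul]
  ring_nf

private lemma gradIII_smul {n : ℕ}
    (hinv : EuclideanSpace ℝ (Fin n) → Matrix (Fin n) (Fin n) ℝ)
    (x : EuclideanSpace ℝ (Fin n) → EuclideanSpace ℝ (Fin (n + 1)))
    (f g : EuclideanSpace ℝ (Fin n) → ℝ) (u : EuclideanSpace ℝ (Fin n))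
    (c : ℝ) (hf : ∀ i, pd f i u = c * pd g i u) :
    gradIII hinv x f u = c • gradIII hinv x g u := by
  simp only [gradIII, hf, smul_neg]
  congr 1
  rw [Finset.smul_sum]
  refine Finset.sum_congr rfl fun i _ => ?_
  rw [Finset.smul_sum]
  refine Finset.sum_congr rfl fun j _ => ?_
  rw [smul_smul]
  ring_nf

/-- given a relative normalization `ȳ₁` with support function
`q₁` on a hypersurface with `K ≠ 0`, every member `ȳ = ȳ₁ + μ·ȳ_AFF` of the
one-parameter family (with `μ` such that the support function `q₁ + μ·q_AFF`
is nowhere zero) is a relative normalization (its support function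
`⟨ξ̄, ȳ⟩ = q₁ + μ q_AFF` never vanishes, and it is the relative normalization
determined by that support function), and its Tchebychev vector field equals
`T̄₁`, the Tchebychev field of `ȳ₁`. Here `q_AFF = |K|^{1/(n+2)}`. -/
theorem one_parameter_family_same_tchebychev {n : ℕ} (hn : 0 < n)
    (U : Set (EuclideanSpace ℝ (Fin n))) (hUo : IsOpen U)
    (x ξ : EuclideanSpace ℝ (Fin n) → EuclideanSpace ℝ (Fin (n + 1)))
    (hinv : EuclideanSpace ℝ (Fin n) → Matrix (Fin n) (Fin n) ℝ)
    (K q₁ : EuclideanSpace ℝ (Fin n) → ℝ)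
    (hξo : ∀ u ∈ U, ∀ i, ⟪ξ u, pdv x i u⟫ = 0)
    (hξn : ∀ u ∈ U, ‖ξ u‖ = 1)
    (hK : ContDiffOn ℝ 1 K U) (hK0 : ∀ u ∈ U, K u ≠ 0)
    (hq₁ : ContDiffOn ℝ 1 q₁ U) (hq₁0 : ∀ u ∈ U, q₁ u ≠ 0)
    (μ : ℝ)
    (hμ : ∀ u ∈ U, q₁ u + μ * |K u| ^ (1 / ((n : ℝ) + 2)) ≠ 0) :
    ∀ u ∈ U,
      relNor hinv x ξ (fun v => q₁ v + μ * |K v| ^ (1 / ((n : ℝ) + 2))) u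
          = relNor hinv x ξ q₁ u
            + μ • relNor hinv x ξ (fun v => |K v| ^ (1 / ((n : ℝ) + 2))) u ∧
      ⟪ξ u, relNor hinv x ξ q₁ u
          + μ • relNor hinv x ξ (fun v => |K v| ^ (1 / ((n : ℝ) + 2))) u⟫
        = q₁ u + μ * |K u| ^ (1 / ((n : ℝ) + 2)) ∧
      tcheb hinv x K (fun v => q₁ v + μ * |K v| ^ (1 / ((n : ℝ) + 2))) u
        = tcheb hinv x K q₁ u := by
  intro u hu
  set p : ℝ := 1 / ((n : ℝ) + 2) with hp
  set qA : EuclideanSpace ℝ (Fin n) → ℝ := fun v => |K v| ^ p with hqA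
  have hKd : DifferentiableAt ℝ K u :=
    (hK.contDiffAt (hUo.mem_nhds hu)).differentiableAt one_ne_zero
  have hq₁d : DifferentiableAt ℝ q₁ u :=
    (hq₁.contDiffAt (hUo.mem_nhds hu)).differentiableAt one_ne_zero
  have hKu : K u ≠ 0 := hK0 u hu
  set c : ℝ := p * |K u| ^ p / K u with hc
  have hA : HasFDerivAt qA (c • fderiv ℝ K u) u :=
    (hasDerivAt_abs_rpow'' p hKu).comp_hasFDerivAt u hKd.hasFDerivAt
  -- pd of qA
  have hpdA : ∀ i, pd qA i u = c * pd K i u := by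
    intro i
    simp only [pd, hA.fderiv, ContinuousLinearMap.coe_smul', Pi.smul_apply, smul_eq_mul]
  -- pd of the sum
  have hpdS : ∀ i, pd (fun v => q₁ v + μ * qA v) i u = pd q₁ i u + μ * pd qA i u := by
    intro i
    have hS : HasFDerivAt (fun v => q₁ v + μ * qA v)
        (fderiv ℝ q₁ u + μ • (c • fderiv ℝ K u)) u :=
      hq₁d.hasFDerivAt.add (hA.const_mul μ)
    simp only [pd, hS.fderiv, hA.fderiv, ContinuousLinearMap.add_apply,
      ContinuousLinearMap.coe_smul', Pi.smul_apply, smul_eq_mul]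
  have hgS : gradIII hinv x (fun v => q₁ v + μ * qA v) u
      = gradIII hinv x q₁ u + μ • gradIII hinv x qA u :=
    gradIII_split hinv x _ q₁ qA u μ hpdS
  have hgA : gradIII hinv x qA u = c • gradIII hinv x K u :=
    gradIII_smul hinv x qA K u c hpdA
  have hgS' : gradIII hinv x (fun v => q₁ v + μ * |K v| ^ p) u
      = gradIII hinv x q₁ u + μ • gradIII hinv x (fun v => |K v| ^ p) u := hgS
  have hgA' : gradIII hinv x (fun v => |K v| ^ p) u = c • gradIII hinv x K u := hgA
  have hξξ : ⟪ξ u, ξ u⟫ = 1 := by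
    rw [real_inner_self_eq_norm_sq, hξn u hu]; norm_num
  have hinnerEq : ∀ q : EuclideanSpace ℝ (Fin n) → ℝ,
      ⟪ξ u, relNor hinv x ξ q u⟫ = q u := by
    intro q
    simp only [relNor, gradIII, inner_add_right, inner_neg_right, inner_sum,
      real_inner_smul_right, hξo u hu, mul_zero, Finset.sum_const_zero, neg_zero,
      zero_add, hξξ, mul_one]
  refine ⟨?_, ?_, ?_⟩
  · simp only [relNor, hgS']
    rw [smul_add, smul_smul]
    abel_nf
    module
  · rw [inner_add_right, real_inner_smul_right, hinnerEq q₁, hinnerEq qA]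
  · simp only [tcheb, hgS', hgA']
    have hcval : ((n : ℝ) + 2) / (2 * (n : ℝ)) * μ * c = μ * qA u / (2 * (n : ℝ) * K u) := by
      have hn' : (n : ℝ) ≠ 0 := Nat.cast_ne_zero.mpr hn.ne'
      have h2 : (n : ℝ) + 2 ≠ 0 := by positivity
      rw [hc, hp]
      field_simp
      ring
    rw [smul_add, smul_smul, smul_smul, hcval]
    match_scalars <;> field_simp <;> ring
end

section
/- If the Tchebychev fields of two relative normalizations satisfy T̄₂ = α·T̄₁ for a constant α, then the relative mean curvatures satisfy H₂ = α·H₁ + μ·H_AFF for some constant μ, where H_AFF is the equiaffine mean curvature. -/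
open scoped RealInnerProductSpace

open Filter Topology in
private lemma const_of_hasFDerivAt_zero' {E : Type*} [NormedAddCommGroup E] [NormedSpace ℝ E]
    {U : Set E} (hUo : IsOpen U) (hUc : IsPreconnected U) {g : E → ℝ}
    (hg : ∀ u ∈ U, HasFDerivAt g (0 : E →L[ℝ] ℝ) u) {a b : E} (ha : a ∈ U) (hb : b ∈ U) :
    g a = g b := by
  have hloc : IsLocallyConstant (fun p : U => g p.1) := by
    rw [IsLocallyConstant.iff_eventually_eq]
    rintro ⟨x, hx⟩
    obtain ⟨ε, hε, hball⟩ := Metric.isOpen_iff.1 hUo x hx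
    have hconst : ∀ y ∈ Metric.ball x ε, g y = g x := by
      intro y hy
      refine (convex_ball x ε).is_const_of_fderivWithin_eq_zero
        (fun z hz => (hg z (hball hz)).differentiableAt.differentiableWithinAt)
        (fun z hz => ?_) hy (Metric.mem_ball_self hε)
      rw [fderivWithin_of_isOpen Metric.isOpen_ball hz, (hg z (hball hz)).fderiv]
    have hev : ∀ᶠ y in 𝓝 x, g y = g x := by
      filter_upwards [Metric.ball_mem_nhds x hε] with y hy using hconst y hy
    exact (continuous_subtype_val.continuousAt).tendsto.eventually (p := fun y => g y = g x) hev
  haveI := Subtype.preconnectedSpace hUc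
  exact hloc.apply_eq_of_preconnectedSpace ⟨a, ha⟩ ⟨b, hb⟩

private lemma sum_sum_smul_comm' {M : Type*} [AddCommMonoid M] [Module ℝ M] {a b : ℕ}
    (v : Fin b → M) (C : Fin a → Fin b → ℝ) :
    (∑ i, ∑ j, C i j • v j) = ∑ j, (∑ i, C i j) • v j := by
  rw [Finset.sum_comm]; simp [Finset.sum_smul]

private lemma smul_sub_sum' {M : Type*} [AddCommGroup M] [Module ℝ M] {b : ℕ}
    (v : Fin b → M) (c d : Fin b → ℝ) (A B : ℝ) :
    A • (∑ j, c j • v j) - B • (∑ j, d j • v j) = ∑ j, (A * c j - B * d j) • v j := by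
  simp [Finset.smul_sum, smul_smul, ← Finset.sum_sub_distrib, sub_smul]

private lemma tcheb_eq_sum' {n : ℕ}
    (hinv : EuclideanSpace ℝ (Fin n) → Matrix (Fin n) (Fin n) ℝ)
    (x : EuclideanSpace ℝ (Fin n) → EuclideanSpace ℝ (Fin (n + 1)))
    (K f : EuclideanSpace ℝ (Fin n) → ℝ) (u : EuclideanSpace ℝ (Fin n)) :
    tcheb hinv x K f u = ∑ j, (∑ i, hinv u i j *
      ((((n : ℝ) + 2) / (2 * (n : ℝ))) * pd f i u
        - (f u / (2 * (n : ℝ) * K u)) * pd K i u)) • pdv x j u := by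
  unfold tcheb gradIII
  rw [smul_neg, smul_neg, sub_neg_eq_add, neg_add_eq_sub,
    sum_sum_smul_comm' (fun j => pdv x j u), sum_sum_smul_comm' (fun j => pdv x j u),
    smul_sub_sum']
  refine Finset.sum_congr rfl fun j _ => ?_
  congr 1
  rw [Finset.mul_sum, Finset.mul_sum, ← Finset.sum_sub_distrib]
  exact Finset.sum_congr rfl fun i _ => by ring

set_option maxHeartbeats 2000000 in
/-- if the Tchebychev fields of two relative normalizations
satisfy `T̄₂ = α·T̄₁` for a constant `α`, then the relative mean curvatures
`Hᵢ = (1/n)·(Bᵢ)ᵢᵢ` (with `ȳᵢ_{/i} = −(Bᵢ)ᵢʲ x̄_{/j}`) satisfy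
`H₂ = α·H₁ + μ·H_AFF` for some constant `μ`, where `H_AFF` is the equiaffine
mean curvature. -/
theorem mean_curvature_relation_of_tchebychev_proportional {n : ℕ} (hn : 0 < n)
    (U : Set (EuclideanSpace ℝ (Fin n))) (hUo : IsOpen U) (hUc : IsConnected U)
    (x ξ : EuclideanSpace ℝ (Fin n) → EuclideanSpace ℝ (Fin (n + 1)))
    (hinv h : EuclideanSpace ℝ (Fin n) → Matrix (Fin n) (Fin n) ℝ)
    (K q₁ q₂ : EuclideanSpace ℝ (Fin n) → ℝ)
    (hind : ∀ u ∈ U, LinearIndependent ℝ (fun j : Fin n => pdv x j u))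
    (hξo : ∀ u ∈ U, ∀ i, ⟪ξ u, pdv x i u⟫ = 0)
    (hξn : ∀ u ∈ U, ‖ξ u‖ = 1)
    (hhinv : ∀ u ∈ U, h u * hinv u = 1)
    (hK : ContDiffOn ℝ 1 K U) (hK0 : ∀ u ∈ U, K u ≠ 0)
    (hq₁ : ContDiffOn ℝ 1 q₁ U) (hq₁0 : ∀ u ∈ U, q₁ u ≠ 0)
    (hq₂ : ContDiffOn ℝ 1 q₂ U) (hq₂0 : ∀ u ∈ U, q₂ u ≠ 0)
    (α : ℝ)
    (hT : ∀ u ∈ U, tcheb hinv x K q₂ u = α • tcheb hinv x K q₁ u)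
    -- the relative shape operators `B₁, B₂, B_AFF` of `ȳ₁`, `ȳ₂`, `ȳ_AFF`:
    (B₁ B₂ BA : EuclideanSpace ℝ (Fin n) → Matrix (Fin n) (Fin n) ℝ)
    (hd₁ : DifferentiableOn ℝ (relNor hinv x ξ q₁) U)
    (hd₂ : DifferentiableOn ℝ (relNor hinv x ξ q₂) U)
    (hdA : DifferentiableOn ℝ
      (relNor hinv x ξ (fun v => |K v| ^ (1 / ((n : ℝ) + 2)))) U)
    (hB₁ : ∀ u ∈ U, ∀ i, pdv (relNor hinv x ξ q₁) i u
      = -(∑ j, B₁ u i j • pdv x j u))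
    (hB₂ : ∀ u ∈ U, ∀ i, pdv (relNor hinv x ξ q₂) i u
      = -(∑ j, B₂ u i j • pdv x j u))
    (hBA : ∀ u ∈ U, ∀ i,
      pdv (relNor hinv x ξ (fun v => |K v| ^ (1 / ((n : ℝ) + 2)))) i u
        = -(∑ j, BA u i j • pdv x j u)) :
    ∃ μ : ℝ, ∀ u ∈ U,
      (1 / (n : ℝ)) * (B₂ u).trace
        = α * ((1 / (n : ℝ)) * (B₁ u).trace)
          + μ * ((1 / (n : ℝ)) * (BA u).trace) := by
  classical
  obtain ⟨u₀, hu₀⟩ := hUc.nonempty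
  have hN : (0:ℝ) < (n:ℝ) := by exact_mod_cast hn
  have hN2 : ((n:ℝ) + 2) ≠ 0 := by positivity
  have hdiffAt : ∀ (f : EuclideanSpace ℝ (Fin n) → ℝ), ContDiffOn ℝ 1 f U →
      ∀ u ∈ U, DifferentiableAt ℝ f u := fun f hf u hu =>
    (hf.differentiableOn one_ne_zero).differentiableAt (hUo.mem_nhds hu)
  -- constant sign of K on U
  have hsign : ∀ u ∈ U, ∀ v ∈ U, K u < 0 → 0 < K v → False := by
    intro u hu v hv h1 h2
    obtain ⟨w, hw, hw0⟩ := hUc.isPreconnected.intermediate_value hu hv hK.continuousOn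
      (Set.mem_Icc.2 ⟨h1.le, h2.le⟩)
    exact hK0 w hw hw0
  set ε : ℝ := if 0 < K u₀ then 1 else -1 with hεdef
  have hε1 : ε = 1 ∨ ε = -1 := by rw [hεdef]; split_ifs <;> simp
  have hε2 : ε * ε = 1 := by rcases hε1 with h | h <;> rw [h] <;> norm_num
  have hεK : ∀ u ∈ U, 0 < ε * K u := by
    intro u hu
    rcases (hK0 u hu).lt_or_gt with h | h
    · have h0 : ¬ 0 < K u₀ := fun hp => hsign u hu u₀ hu₀ h hp
      rw [hεdef, if_neg h0]; nlinarith
    · have h0 : 0 < K u₀ := by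
        rcases (hK0 u₀ hu₀).lt_or_gt with h' | h'
        · exact (hsign u₀ hu₀ u hu h' h).elim
        · exact h'
      rw [hεdef, if_pos h0]; nlinarith
  -- step 2 : pointwise coefficient identity from tcheb proportionality
  have hstep2 : ∀ u ∈ U, ∀ i : Fin n,
      (((n:ℝ)+2)/(2*(n:ℝ))) * (pd q₂ i u - α * pd q₁ i u)
        = ((q₂ u - α * q₁ u) / (2*(n:ℝ)*K u)) * pd K i u := by
    intro u hu
    set a : Fin n → ℝ := fun i => (((n:ℝ)+2)/(2*(n:ℝ))) * (pd q₂ i u - α * pd q₁ i u)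
      - ((q₂ u - α * q₁ u) / (2*(n:ℝ)*K u)) * pd K i u with hadef
    have key : (∑ j, (∑ i, hinv u i j * a i) • pdv x j u)
        = tcheb hinv x K q₂ u - α • tcheb hinv x K q₁ u := by
      rw [tcheb_eq_sum' hinv x K q₂ u, tcheb_eq_sum' hinv x K q₁ u, Finset.smul_sum,
        ← Finset.sum_sub_distrib]
      refine Finset.sum_congr rfl fun j _ => ?_
      rw [smul_smul, ← sub_smul]
      congr 1
      rw [Finset.mul_sum, ← Finset.sum_sub_distrib]
      refine Finset.sum_congr rfl fun i _ => ?_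
      simp only [hadef]
      ring
    have hz : (∑ j, (∑ i, hinv u i j * a i) • pdv x j u) = 0 := by
      rw [key, hT u hu, sub_self]
    have hcoef := Fintype.linearIndependent_iff.1 (hind u hu)
      (fun j => ∑ i, hinv u i j * a i) hz
    have ha0 : ∀ i, a i = 0 := by
      have h2 : hinv u * h u = 1 := mul_eq_one_comm.mp (hhinv u hu)
      have h1 : Matrix.vecMul a (hinv u) = 0 := by
        funext j
        simpa [Matrix.vecMul, dotProduct, mul_comm] using hcoef j
      have h3 : a = Matrix.vecMul (Matrix.vecMul a (hinv u)) (h u) := by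
        rw [Matrix.vecMul_vecMul, h2, Matrix.vecMul_one]
      rw [h1] at h3
      intro i
      rw [h3]
      simp [Matrix.zero_vecMul]
    intro i
    have := ha0 i
    simp only [hadef] at this
    linarith
  -- the combination q₂ - α q₁ satisfies the logarithmic derivative equation
  have hq' : ∀ u ∈ U, HasFDerivAt (fun v => q₂ v - α * q₁ v)
      (((q₂ u - α * q₁ u) / ((((n:ℝ)+2)) * K u)) • fderiv ℝ K u) u := by
    intro u hu
    have h2 := (hdiffAt q₂ hq₂ u hu).hasFDerivAt
    have h1 := (hdiffAt q₁ hq₁ u hu).hasFDerivAt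
    have hq0 : HasFDerivAt (fun v => q₂ v - α * q₁ v)
        (fderiv ℝ q₂ u - α • fderiv ℝ q₁ u) u := h2.sub (h1.const_mul α)
    have heq : fderiv ℝ q₂ u - α • fderiv ℝ q₁ u
        = ((q₂ u - α * q₁ u) / ((((n:ℝ)+2)) * K u)) • fderiv ℝ K u := by
      apply ContinuousLinearMap.coe_injective
      apply Module.Basis.ext (PiLp.basisFun 2 ℝ (Fin n))
      intro i
      have hb : (PiLp.basisFun 2 ℝ (Fin n)) i = EuclideanSpace.single i 1 := by
        exact PiLp.basisFun_apply 2 ℝ (Fin n) i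
      rw [hb]
      have hs := hstep2 u hu i
      simp only [pd] at hs
      simp only [ContinuousLinearMap.coe_sub, ContinuousLinearMap.coe_smul, LinearMap.sub_apply,
        LinearMap.smul_apply, ContinuousLinearMap.coe_coe, Pi.sub_apply, Pi.smul_apply, smul_eq_mul]
      have hKu := hK0 u hu
      have h2n : (2*(n:ℝ)) ≠ 0 := by positivity
      field_simp at hs ⊢
      exact mul_left_cancel₀ h2n (by linear_combination (2*(n:ℝ)) * hs)
    rw [heq] at hq0
    exact hq0
  -- the auxiliary function g is constant on U
  have hg0 : ∀ u ∈ U, HasFDerivAt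
      (fun v => (q₂ v - α * q₁ v) * (ε * K v) ^ (-(1/((n:ℝ)+2))))
      (0 : EuclideanSpace ℝ (Fin n) →L[ℝ] ℝ) u := by
    intro u hu
    have hKd := (hdiffAt K hK u hu).hasFDerivAt
    have hr : HasFDerivAt (fun v => (ε * K v) ^ (-(1/((n:ℝ)+2))))
        (((-(1/((n:ℝ)+2))) * (ε * K u) ^ ((-(1/((n:ℝ)+2))) - 1)) • (ε • fderiv ℝ K u)) u :=
      (hKd.const_mul ε).rpow_const (Or.inl (hεK u hu).ne')
    have hmul := (hq' u hu).mul hr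
    refine hmul.congr_fderiv (Eq.symm ?_)
    rw [smul_smul, smul_smul, smul_smul, ← add_smul]
    convert (zero_smul ℝ (fderiv ℝ K u)).symm using 2
    rw [Real.rpow_sub (hεK u hu), Real.rpow_one]
    have hKu := hK0 u hu
    have hεKu := (hεK u hu).ne'
    rcases hε1 with hE | hE <;> rw [hE] at hεKu ⊢ <;> field_simp <;> ring
  obtain ⟨μ, hgc⟩ : ∃ μ : ℝ, ∀ v ∈ U,
      (q₂ v - α * q₁ v) * (ε * K v) ^ (-(1/((n:ℝ)+2))) = μ :=
    ⟨(q₂ u₀ - α * q₁ u₀) * (ε * K u₀) ^ (-(1/((n:ℝ)+2))),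
      fun v hv => const_of_hasFDerivAt_zero' hUo hUc.isPreconnected hg0 hv hu₀⟩
  have habs : ∀ v ∈ U, |K v| = ε * K v := by
    intro v hv
    have hp := hεK v hv
    rcases hε1 with hE | hE
    · rw [hE, one_mul] at hp ⊢
      exact abs_of_pos hp
    · rw [hE] at hp ⊢
      rw [abs_of_neg (by linarith)]
      ring
  have hdecomp : ∀ v ∈ U, q₂ v = α * q₁ v + μ * |K v| ^ (1/((n:ℝ)+2)) := by
    intro v hv
    have h1 := hgc v hv
    have hpos := hεK v hv
    have h2 : (ε*K v) ^ (-(1/((n:ℝ)+2))) * (ε*K v) ^ ((1/((n:ℝ)+2))) = 1 := by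
      rw [← Real.rpow_add hpos]
      simp
    have h3 : q₂ v - α * q₁ v = μ * (ε*K v) ^ ((1/((n:ℝ)+2))) := by
      have := congrArg (fun t => t * (ε*K v) ^ ((1/((n:ℝ)+2)))) h1
      rw [mul_assoc, h2, mul_one] at this
      exact this
    rw [habs v hv]
    linarith [h3]
  -- differentiability of the equiaffine support function
  have hqA' : ∀ u ∈ U, DifferentiableAt ℝ (fun v => |K v| ^ (1/((n:ℝ)+2))) u := by
    intro u hu
    have hr : HasFDerivAt (fun v => (ε * K v) ^ ((1/((n:ℝ)+2))))
        (((1/((n:ℝ)+2)) * (ε * K u) ^ ((1/((n:ℝ)+2)) - 1)) • (ε • fderiv ℝ K u)) u :=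
      (((hdiffAt K hK u hu).hasFDerivAt).const_mul ε).rpow_const (Or.inl (hεK u hu).ne')
    have h2 : HasFDerivAt (fun v => |K v| ^ (1/((n:ℝ)+2)))
        (((1/((n:ℝ)+2)) * (ε * K u) ^ ((1/((n:ℝ)+2)) - 1)) • (ε • fderiv ℝ K u)) u := by
      refine hr.congr_of_eventuallyEq ?_
      filter_upwards [hUo.mem_nhds hu] with v hv
      rw [habs v hv]
    exact h2.differentiableAt
  -- linearity of the partial derivatives
  have hpd : ∀ u ∈ U, ∀ i : Fin n, pd q₂ i u
      = α * pd q₁ i u + μ * pd (fun v => |K v| ^ (1/((n:ℝ)+2))) i u := by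
    intro u hu i
    have hq1h := (hdiffAt q₁ hq₁ u hu).hasFDerivAt
    have hAh := (hqA' u hu).hasFDerivAt
    have h2 : HasFDerivAt q₂
        (α • fderiv ℝ q₁ u + μ • fderiv ℝ (fun v => |K v| ^ (1/((n:ℝ)+2))) u) u := by
      refine HasFDerivAt.congr_of_eventuallyEq ((hq1h.const_mul α).add (hAh.const_mul μ)) ?_
      filter_upwards [hUo.mem_nhds hu] with v hv using hdecomp v hv
    simp only [pd, h2.fderiv]
    simp
  -- pointwise decomposition of the relative normalization
  have hFeq : ∀ v ∈ U, relNor hinv x ξ q₂ v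
      = α • relNor hinv x ξ q₁ v + μ • relNor hinv x ξ (fun w => |K w| ^ (1/((n:ℝ)+2))) v := by
    intro v hv
    have hpdv := hpd v hv
    have hval := hdecomp v hv
    simp only [relNor, gradIII]
    have hsum : (∑ i, ∑ j, (hinv v i j * pd q₂ i v) • pdv x j v)
        = α • (∑ i, ∑ j, (hinv v i j * pd q₁ i v) • pdv x j v)
          + μ • (∑ i, ∑ j, (hinv v i j * pd (fun w => |K w| ^ (1/((n:ℝ)+2))) i v) • pdv x j v) := by
      simp only [Finset.smul_sum, smul_smul, ← Finset.sum_add_distrib]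
      refine Finset.sum_congr rfl fun i _ => Finset.sum_congr rfl fun j _ => ?_
      rw [hpdv i, ← add_smul]
      congr 1
      ring
    rw [hsum, hval]
    module
  -- linearity of the shape-operator rows
  have hpdvF : ∀ u ∈ U, ∀ i : Fin n, pdv (relNor hinv x ξ q₂) i u
      = α • pdv (relNor hinv x ξ q₁) i u
        + μ • pdv (relNor hinv x ξ (fun w => |K w| ^ (1/((n:ℝ)+2)))) i u := by
    intro u hu i
    have hF1 := (hd₁.differentiableAt (hUo.mem_nhds hu)).hasFDerivAt
    have hFA := (hdA.differentiableAt (hUo.mem_nhds hu)).hasFDerivAt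
    have h2 : HasFDerivAt (relNor hinv x ξ q₂)
        (α • fderiv ℝ (relNor hinv x ξ q₁) u
          + μ • fderiv ℝ (relNor hinv x ξ (fun w => |K w| ^ (1/((n:ℝ)+2)))) u) u := by
      refine HasFDerivAt.congr_of_eventuallyEq ((hF1.const_smul α).add (hFA.const_smul μ)) ?_
      filter_upwards [hUo.mem_nhds hu] with v hv using hFeq v hv
    simp only [pdv, h2.fderiv]
    simp
  -- conclusion
  refine ⟨μ, fun u hu => ?_⟩
  have hrel : ∀ i : Fin n, B₂ u i i = α * B₁ u i i + μ * BA u i i := by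
    intro i
    have hv := hpdvF u hu i
    rw [hB₂ u hu i, hB₁ u hu i, hBA u hu i] at hv
    have hz : ∑ j, (B₂ u i j - α * B₁ u i j - μ * BA u i j) • pdv x j u = 0 := by
      have expand : ∑ j, (B₂ u i j - α * B₁ u i j - μ * BA u i j) • pdv x j u
          = (∑ j, B₂ u i j • pdv x j u) - α • (∑ j, B₁ u i j • pdv x j u)
            - μ • (∑ j, BA u i j • pdv x j u) := by
        simp only [Finset.smul_sum, smul_smul, ← Finset.sum_sub_distrib]
        exact Finset.sum_congr rfl fun j _ => by rw [← sub_smul, ← sub_smul]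
      rw [expand]
      have hv2 : (∑ j, B₂ u i j • pdv x j u)
          = α • (∑ j, B₁ u i j • pdv x j u) + μ • (∑ j, BA u i j • pdv x j u) := by
        have h3 := congrArg Neg.neg hv
        simpa [smul_neg, neg_add, add_comm] using h3
      rw [hv2]
      abel
    have h0 := Fintype.linearIndependent_iff.1 (hind u hu)
      (fun j => B₂ u i j - α * B₁ u i j - μ * BA u i j) hz i
    linarith
  simp only [Matrix.trace, Matrix.diag]
  have e2 : ∑ i, B₂ u i i = ∑ i, (α * B₁ u i i + μ * BA u i i) :=
    Finset.sum_congr rfl fun i _ => hrel i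
  rw [e2, Finset.sum_add_distrib, ← Finset.mul_sum, ← Finset.mul_sum]
  ring
end

section
/- Let x̄ : U → ℝ^{n+1} be a C³ hypersurface immersion with nowhere-zero Gaussian curvature K, second fundamental form h_{ij}, and unit normal ξ̄. Then the second Beltrami operator of II applied to the position vector satisfies Δ^{II} x̄ = −(1/(2K))·∇^{II}(K, x̄) + n·ξ̄, where ∇^{II}(K, x̄) = h^{ij}K_{/i} x̄_{/j}. -/
open scoped RealInnerProductSpace

/-- Christoffel symbols `Γ^k_{ij} = ½ g^{km}(∂_i g_{jm} + ∂_j g_{im} − ∂_m g_{ij})`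
of a metric `g` with inverse `ginv`. -/
noncomputable def christoffel {n : ℕ}
    (g ginv : EuclideanSpace ℝ (Fin n) → Matrix (Fin n) (Fin n) ℝ)
    (u : EuclideanSpace ℝ (Fin n)) (k i j : Fin n) : ℝ :=
  (1 / 2) * ∑ m, ginv u k m *
    (pd (fun v => g v j m) i u + pd (fun v => g v i m) j u
      - pd (fun v => g v i j) m u)


section Helpers
variable {n m p : ℕ} {U : Set (EuclideanSpace ℝ (Fin n))} {u : EuclideanSpace ℝ (Fin n)}



lemma pd_congr_on (hUo : IsOpen U) (hu : u ∈ U) {f g : EuclideanSpace ℝ (Fin n) → ℝ}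
    (hfg : ∀ v ∈ U, f v = g v) : pd f i u = pd g i u := by
  have : f =ᶠ[nhds u] g := Filter.eventuallyEq_of_mem (hUo.mem_nhds hu) hfg
  simp [pd, this.fderiv_eq]

lemma pdv_congr_on (hUo : IsOpen U) (hu : u ∈ U)
    {f g : EuclideanSpace ℝ (Fin n) → EuclideanSpace ℝ (Fin m)} {i : Fin n}
    (hfg : ∀ v ∈ U, f v = g v) : pdv f i u = pdv g i u := by
  have : f =ᶠ[nhds u] g := Filter.eventuallyEq_of_mem (hUo.mem_nhds hu) hfg
  simp [pdv, this.fderiv_eq]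

lemma pd_inner {f g : EuclideanSpace ℝ (Fin n) → EuclideanSpace ℝ (Fin m)} {i : Fin n}
    (hf : DifferentiableAt ℝ f u) (hg : DifferentiableAt ℝ g u) :
    pd (fun v => ⟪f v, g v⟫) i u = ⟪pdv f i u, g u⟫ + ⟪f u, pdv g i u⟫ := by
  simp only [pd, pdv]
  rw [fderiv_inner_apply (𝕜 := ℝ) hf hg]
  rw [add_comm]

lemma pd_mul {f g : EuclideanSpace ℝ (Fin n) → ℝ} {i : Fin n}
    (hf : DifferentiableAt ℝ f u) (hg : DifferentiableAt ℝ g u) :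
    pd (fun v => f v * g v) i u = pd f i u * g u + f u * pd g i u := by
  simp only [pd]
  rw [fderiv_fun_mul hf hg]
  simp only [ContinuousLinearMap.add_apply, ContinuousLinearMap.smul_apply, smul_eq_mul]
  ring



lemma pdv_contDiffOn {f : EuclideanSpace ℝ (Fin n) → EuclideanSpace ℝ (Fin m)}
    {k : ℕ} (hf : ContDiffOn ℝ (k + 1) f U) (hUo : IsOpen U) (i : Fin n) :
    ContDiffOn ℝ k (pdv f i) U := by
  have h1 : ContDiffOn ℝ k (fderiv ℝ f) U :=
    hf.fderiv_of_isOpen hUo (by norm_cast)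
  exact h1.clm_apply contDiffOn_const

lemma pdv_symm {f : EuclideanSpace ℝ (Fin n) → EuclideanSpace ℝ (Fin m)}
    (hf : ContDiffOn ℝ 2 f U) (hUo : IsOpen U) (hu : u ∈ U) (i j : Fin n) :
    pdv (pdv f i) j u = pdv (pdv f j) i u := by
  have hc : ContDiffAt ℝ 2 f u := hf.contDiffAt (hUo.mem_nhds hu)
  have hsym : IsSymmSndFDerivAt ℝ f u := hc.isSymmSndFDerivAt (by simp [minSmoothness_of_isRCLikeNormedField])
  have hd : DifferentiableAt ℝ (fderiv ℝ f) u := by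
    have := (hc.fderiv_right (m := 1) (by norm_cast)).differentiableAt one_ne_zero
    exact this
  have key : ∀ w z : EuclideanSpace ℝ (Fin n),
      fderiv ℝ (fun v => fderiv ℝ f v w) u z = fderiv ℝ (fderiv ℝ f) u z w := by
    intro w z
    have h2 : HasFDerivAt (fun v => fderiv ℝ f v w)
        ((ContinuousLinearMap.apply ℝ (EuclideanSpace ℝ (Fin m)) w).comp
          (fderiv ℝ (fderiv ℝ f) u)) u :=
      (ContinuousLinearMap.apply ℝ (EuclideanSpace ℝ (Fin m)) w).hasFDerivAt.comp u
        hd.hasFDerivAt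
    rw [h2.fderiv]; rfl
  show fderiv ℝ (fun v => fderiv ℝ f v (EuclideanSpace.single i 1)) u (EuclideanSpace.single j 1)
      = fderiv ℝ (fun v => fderiv ℝ f v (EuclideanSpace.single j 1)) u (EuclideanSpace.single i 1)
  rw [key, key]
  exact hsym _ _



lemma det_updateColumn_expand (A : Matrix (Fin p) (Fin p) ℝ) (i : Fin p) (c : Fin p → ℝ) :
    (A.updateCol i c).det
      = ∑ σ : Equiv.Perm (Fin p), (Equiv.Perm.sign σ : ℝ) *
          (c (σ i) * ∏ j ∈ Finset.univ.erase i, A (σ j) j) := by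
  rw [Matrix.det_apply]
  refine Finset.sum_congr rfl fun σ _ => ?_
  rw [← Finset.mul_prod_erase Finset.univ _ (Finset.mem_univ i)]
  rw [Matrix.updateCol_self]
  rw [Finset.prod_congr rfl fun j hj =>
    Matrix.updateCol_ne (Finset.ne_of_mem_erase hj)]
  simp [Units.smul_def, zsmul_eq_mul]

lemma pd_det {M : EuclideanSpace ℝ (Fin n) → Matrix (Fin p) (Fin p) ℝ}
    (hM : ∀ i j, DifferentiableAt ℝ (fun v => M v i j) u) (m : Fin n) :
    pd (fun v => (M v).det) m u
      = ∑ i, ∑ q, (M u).adjugate i q * pd (fun v => M v q i) m u := by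
  have hre : (fun v => (M v).det)
      = fun v => ∑ σ : Equiv.Perm (Fin p), (Equiv.Perm.sign σ : ℝ) *
          ∏ i, M v (σ i) i := by
    funext v
    rw [Matrix.det_apply]
    refine Finset.sum_congr rfl fun σ _ => ?_
    simp [Units.smul_def, zsmul_eq_mul]
  have hprod : ∀ σ : Equiv.Perm (Fin p),
      pd (fun v => ∏ i, M v (σ i) i) m u
        = ∑ i, (∏ j ∈ Finset.univ.erase i, M u (σ j) j) *
            pd (fun v => M v (σ i) i) m u := by
    intro σ
    have := fderiv_finset_prod (𝕜 := ℝ) (u := Finset.univ)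
      (g := fun i v => M v (σ i) i) (x := u) (fun i _ => hM (σ i) i)
    simp only [pd, this]
    simp
  have hdiffprod : ∀ σ : Equiv.Perm (Fin p),
      DifferentiableAt ℝ (fun v => ∏ i, M v (σ i) i) u := by
    intro σ
    exact (HasFDerivAt.finset_prod (fun i _ => (hM (σ i) i).hasFDerivAt)).differentiableAt
  have hsum : pd (fun v => (M v).det) m u
      = ∑ σ : Equiv.Perm (Fin p), (Equiv.Perm.sign σ : ℝ) *
          pd (fun v => ∏ i, M v (σ i) i) m u := by
    rw [hre]
    simp only [pd]
    rw [fderiv_fun_sum (fun σ _ => ((hdiffprod σ).const_mul _))]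
    simp only [ContinuousLinearMap.sum_apply, Finset.sum_apply]
    refine Finset.sum_congr rfl fun σ _ => ?_
    rw [fderiv_const_mul (hdiffprod σ)]
    simp
  rw [hsum]
  -- rearrange
  have key : ∀ i : Fin p,
      (∑ σ : Equiv.Perm (Fin p), (Equiv.Perm.sign σ : ℝ) *
        ((∏ j ∈ Finset.univ.erase i, M u (σ j) j) * pd (fun v => M v (σ i) i) m u))
      = ∑ q, (M u).adjugate i q * pd (fun v => M v q i) m u := by
    intro i
    have h1 : ((M u).updateCol i fun q => pd (fun v => M v q i) m u).det
        = ∑ q, (M u).adjugate i q * pd (fun v => M v q i) m u := by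
      have := Matrix.cramer_eq_adjugate_mulVec (M u)
        (fun q => pd (fun v => M v q i) m u)
      have h2 := congrFun this i
      rw [Matrix.cramer_apply] at h2
      rw [h2]
      rfl
    rw [← h1, det_updateColumn_expand]
    refine Finset.sum_congr rfl fun σ _ => ?_
    ring
  calc ∑ σ : Equiv.Perm (Fin p), (Equiv.Perm.sign σ : ℝ) *
        pd (fun v => ∏ i, M v (σ i) i) m u
      = ∑ σ : Equiv.Perm (Fin p), ∑ i, (Equiv.Perm.sign σ : ℝ) *
          ((∏ j ∈ Finset.univ.erase i, M u (σ j) j) * pd (fun v => M v (σ i) i) m u) := by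
        refine Finset.sum_congr rfl fun σ _ => ?_
        rw [hprod σ, Finset.mul_sum]
    _ = ∑ i, ∑ σ : Equiv.Perm (Fin p), (Equiv.Perm.sign σ : ℝ) *
          ((∏ j ∈ Finset.univ.erase i, M u (σ j) j) * pd (fun v => M v (σ i) i) m u) :=
        Finset.sum_comm
    _ = ∑ i, ∑ q, (M u).adjugate i q * pd (fun v => M v q i) m u :=
        Finset.sum_congr rfl fun i _ => key i



lemma frame_eq_zero (e : Fin p → EuclideanSpace ℝ (Fin (p + 1)))
    (ξu : EuclideanSpace ℝ (Fin (p + 1))) (G : Matrix (Fin p) (Fin p) ℝ)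
    (hG : ∀ i j, G i j = ⟪e i, e j⟫) (hGdet : G.det ≠ 0)
    (hξe : ∀ i, ⟪ξu, e i⟫ = 0) (hξn : ‖ξu‖ = 1)
    (w : EuclideanSpace ℝ (Fin (p + 1)))
    (hwe : ∀ i, ⟪e i, w⟫ = 0) (hwξ : ⟪ξu, w⟫ = 0) : w = 0 := by
  set b : Fin (p + 1) → EuclideanSpace ℝ (Fin (p + 1)) := Fin.snoc e ξu with hb
  have hbw : ∀ i, ⟪b i, w⟫ = 0 := by
    intro i
    refine Fin.lastCases ?_ ?_ i
    · simp [hb, Fin.snoc_last, hwξ]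
    · intro j; simp [hb, Fin.snoc_castSucc, hwe j]
  have li : LinearIndependent ℝ b := by
    rw [Fintype.linearIndependent_iff]
    intro c hc
    have hsplit : (∑ i : Fin p, c i.castSucc • e i) + c (Fin.last p) • ξu = 0 := by
      rw [← hc, Fin.sum_univ_castSucc]
      simp [hb]
    have hlast : c (Fin.last p) = 0 := by
      have := congrArg (fun z => ⟪ξu, z⟫) hsplit
      simp only [inner_add_right, inner_sum, inner_smul_right, inner_zero_right] at this
      rw [Finset.sum_eq_zero (fun i _ => by rw [hξe i, mul_zero])] at this
      have h1 : ⟪ξu, ξu⟫ = (1 : ℝ) := by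
        rw [real_inner_self_eq_norm_sq, hξn]; norm_num
      rw [h1] at this
      linarith
    have hsum : (∑ i : Fin p, c i.castSucc • e i) = 0 := by
      rw [hlast, zero_smul, add_zero] at hsplit; exact hsplit
    have hv : ∀ j, ∑ i : Fin p, c i.castSucc * G i j = 0 := by
      intro j
      have := congrArg (fun z => ⟪z, e j⟫) hsum
      simp only [sum_inner, inner_smul_left, inner_zero_left] at this
      rw [← this]
      refine Finset.sum_congr rfl fun i _ => ?_
      rw [hG]; norm_num
    have hvm : Matrix.vecMul (fun i => c i.castSucc) G = 0 := by
      funext j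
      simpa [Matrix.vecMul, dotProduct] using hv j
    have hc0 : (fun i : Fin p => c i.castSucc) = 0 :=
      Matrix.eq_zero_of_vecMul_eq_zero hGdet hvm
    intro i
    refine Fin.lastCases hlast (fun j => ?_) i
    exact congrFun hc0 j
  have hcard : Fintype.card (Fin (p + 1)) =
      Module.finrank ℝ (EuclideanSpace ℝ (Fin (p + 1))) := by
    simp [finrank_euclideanSpace_fin]
  let B := basisOfLinearIndependentOfCardEqFinrank li hcard
  have hB : ⇑B = b := coe_basisOfLinearIndependentOfCardEqFinrank li hcard
  have hw : ⟪w, w⟫ = 0 := by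
    nth_rewrite 1 [← B.sum_repr w]
    rw [sum_inner]
    refine Finset.sum_eq_zero fun i _ => ?_
    rw [inner_smul_left]
    rw [hB]
    rw [hbw i]
    simp
  simpa using inner_self_eq_zero.mp hw



lemma sum_comm3 {M : Type*} [AddCommMonoid M] (f : Fin n → Fin n → Fin n → M) :
    ∑ i, ∑ j, ∑ l, f i j l = ∑ l, ∑ i, ∑ j, f i j l :=
  calc ∑ i, ∑ j, ∑ l, f i j l
      = ∑ i, ∑ l, ∑ j, f i j l := Finset.sum_congr rfl fun _ _ => Finset.sum_comm
    _ = ∑ l, ∑ i, ∑ j, f i j l := Finset.sum_comm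

lemma sum_congr2 (f g : Fin n → Fin n → ℝ) (h : ∀ i j, f i j = g i j) :
    ∑ i, ∑ j, f i j = ∑ i, ∑ j, g i j :=
  Finset.sum_congr rfl fun i _ => Finset.sum_congr rfl fun j _ => h i j

lemma sum_split2 (f g : Fin n → Fin n → ℝ) :
    ∑ i, ∑ j, (f i j + g i j) = (∑ i, ∑ j, f i j) + ∑ i, ∑ j, g i j := by
  rw [← Finset.sum_add_distrib]
  exact Finset.sum_congr rfl fun i _ => Finset.sum_add_distrib

lemma sum_split2sub (f g : Fin n → Fin n → ℝ) :
    ∑ i, ∑ j, (f i j - g i j) = (∑ i, ∑ j, f i j) - ∑ i, ∑ j, g i j := by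
  rw [← Finset.sum_sub_distrib]
  exact Finset.sum_congr rfl fun i _ => Finset.sum_sub_distrib _ _

lemma sum_pull2 (c : ℝ) (f : Fin n → Fin n → ℝ) :
    ∑ i, ∑ j, c * f i j = c * ∑ i, ∑ j, f i j := by
  simp [Finset.mul_sum]

lemma sum_delta_right (f : Fin n → ℝ) (k : Fin n) :
    (∑ l, f l * (if k = l then (1:ℝ) else 0)) = f k := by
  simp [mul_ite]

lemma scalar_main (A B G Gi : Matrix (Fin n) (Fin n) ℝ)
    (Γ1 S Hd Gd : Fin n → Fin n → Fin n → ℝ)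
    (Γg : Fin n → Fin n → Fin n → ℝ)
    (dh dg dK : Fin n → ℝ) (Ku : ℝ)
    (hAB : A * B = 1) (hBA : B * A = 1)
    (hAsym : ∀ i j, A i j = A j i) (hBsym : ∀ i j, B i j = B j i)
    (hGisym : ∀ i j, Gi i j = Gi j i)
    (hΓg : ∀ k i j, Γg k i j = ∑ m, Gi k m * Γ1 m i j)
    (hGd : ∀ m i j, Gd m i j = Γ1 j i m + Γ1 i j m)
    (hHd : ∀ m i j, Hd m i j = -(∑ l, Γg l i j * A l m) + S i j m)
    (hS12 : ∀ a b c, S a b c = S b a c) (hS23 : ∀ a b c, S a b c = S a c b)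
    (hdh : ∀ m, dh m = A.det * ∑ i, ∑ j, B i j * Hd m i j)
    (hdg : ∀ m, dg m = G.det * ∑ i, ∑ j, Gi i j * Gd m i j)
    (hdetA : A.det ≠ 0) (hdetG : G.det ≠ 0) (hKu : Ku = A.det / G.det)
    (hdK : ∀ m, dK m = (dh m - Ku * dg m) / G.det) (k : Fin n) :
    ∑ i, ∑ j, B i j * (Γg k i j -
        (1/2) * ∑ m, B k m * (Hd i j m + Hd j i m - Hd m i j))
      = -(1/(2*Ku)) * ∑ i, B i k * dK i := by
  classical
  have hBAd : ∀ k l, (∑ m, B k m * A m l) = if k = l then (1:ℝ) else 0 := by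
    intro k l; rw [← Matrix.mul_apply, hBA, Matrix.one_apply]
  have hABd : ∀ l j, (∑ i, A l i * B i j) = if l = j then (1:ℝ) else 0 := by
    intro l j; rw [← Matrix.mul_apply, hAB, Matrix.one_apply]
  set C : Fin n → ℝ := fun l => ∑ i, ∑ j, B i j * Γg l i j with hC
  set D : Fin n → ℝ := fun m => ∑ i, ∑ j, B i j * Hd m i j with hD
  set SS : Fin n → ℝ := fun m => ∑ i, ∑ j, B i j * S i j m with hSS
  set Tr : Fin n → ℝ := fun m => ∑ j, Γg j j m with hTr
  -- Q1 : D m = -(∑ l, C l * A l m) + SS m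
  have hQ1 : ∀ m, D m = -(∑ l, C l * A l m) + SS m := by
    intro m
    calc D m = ∑ i, ∑ j, ((∑ l, -(B i j * (Γg l i j * A l m))) + B i j * S i j m) := by
          simp only [hD]
          refine sum_congr2 _ _ fun i j => ?_
          rw [hHd, mul_add, mul_neg, Finset.mul_sum, ← Finset.sum_neg_distrib]
      _ = (∑ i, ∑ j, ∑ l, -(B i j * (Γg l i j * A l m))) + SS m := by
          rw [sum_split2]
      _ = -(∑ l, C l * A l m) + SS m := by
          congr 1
          rw [sum_comm3, ← Finset.sum_neg_distrib]
          refine Finset.sum_congr rfl fun l _ => ?_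
          simp only [hC]
          rw [Finset.sum_mul, ← Finset.sum_neg_distrib]
          refine Finset.sum_congr rfl fun i _ => ?_
          rw [Finset.sum_mul, ← Finset.sum_neg_distrib]
          exact Finset.sum_congr rfl fun j _ => by ring
  -- Q2 : E m = -(Tr m) + SS m
  have hQ2 : ∀ m, (∑ i, ∑ j, B i j * Hd i j m) = -(Tr m) + SS m := by
    intro m
    calc ∑ i, ∑ j, B i j * Hd i j m
        = ∑ i, ∑ j, ((∑ l, -(B i j * (Γg l j m * A l i))) + B i j * S i j m) := by
          refine sum_congr2 _ _ fun i j => ?_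
          rw [hHd, mul_add, mul_neg, Finset.mul_sum, ← Finset.sum_neg_distrib,
            hS23 j m i, hS12 j i m]
      _ = (∑ i, ∑ j, ∑ l, -(B i j * (Γg l j m * A l i))) + SS m := by
          rw [sum_split2]
      _ = -(Tr m) + SS m := by
          congr 1
          rw [sum_comm3]
          have key : ∀ l : Fin n, (∑ i, ∑ j, -(B i j * (Γg l j m * A l i)))
              = -(∑ j, Γg l j m * (if l = j then (1:ℝ) else 0)) := by
            intro l
            rw [Finset.sum_comm, ← Finset.sum_neg_distrib]
            refine Finset.sum_congr rfl fun j _ => ?_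
            rw [← hABd l j, Finset.mul_sum, ← Finset.sum_neg_distrib]
            exact Finset.sum_congr rfl fun i _ => by ring
          rw [Finset.sum_congr rfl fun l _ => key l]
          simp only [hTr]
          rw [Finset.sum_neg_distrib, neg_inj]
          exact Finset.sum_congr rfl fun l _ => sum_delta_right (fun j => Γg l j m) l
  -- Q3 : the christoffel part
  have e1 : ∀ m, (∑ i, ∑ j, B i j * Hd j i m) = ∑ i, ∑ j, B i j * Hd i j m := by
    intro m
    rw [Finset.sum_comm]
    exact sum_congr2 _ _ fun i j => by rw [hBsym j i]
  have hQ3 : ∑ i, ∑ j, B i j *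
        ((1/2) * ∑ m, B k m * (Hd i j m + Hd j i m - Hd m i j))
      = (∑ m, B k m * (∑ i, ∑ j, B i j * Hd i j m)) - (1/2) * ∑ m, B k m * D m := by
    calc ∑ i, ∑ j, B i j * ((1/2) * ∑ m, B k m * (Hd i j m + Hd j i m - Hd m i j))
        = ∑ i, ∑ j, ∑ m, ((1/2) * B k m) *
            (B i j * Hd i j m + B i j * Hd j i m - B i j * Hd m i j) := by
          refine sum_congr2 _ _ fun i j => ?_
          rw [Finset.mul_sum, Finset.mul_sum]
          exact Finset.sum_congr rfl fun m _ => by ring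
      _ = ∑ m, ∑ i, ∑ j, ((1/2) * B k m) *
            (B i j * Hd i j m + B i j * Hd j i m - B i j * Hd m i j) := sum_comm3 _
      _ = ∑ m, ((1/2) * B k m) * ((∑ i, ∑ j, B i j * Hd i j m)
            + (∑ i, ∑ j, B i j * Hd j i m) - D m) := by
          refine Finset.sum_congr rfl fun m _ => ?_
          simp only [hD]
          rw [← sum_split2, ← sum_split2sub, ← sum_pull2]
      _ = (∑ m, B k m * (∑ i, ∑ j, B i j * Hd i j m)) - (1/2) * ∑ m, B k m * D m := by
          rw [Finset.mul_sum, ← Finset.sum_sub_distrib]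
          refine Finset.sum_congr rfl fun m _ => ?_
          rw [e1 m]
          simp only [hD]
          ring
  -- contraction : ∑ m, B k m * (∑ l, C l * A l m) = C k
  have hCA : (∑ m, B k m * (∑ l, C l * A l m)) = C k := by
    calc ∑ m, B k m * (∑ l, C l * A l m)
        = ∑ m, ∑ l, C l * (B k m * A m l) := by
          refine Finset.sum_congr rfl fun m _ => ?_
          rw [Finset.mul_sum]
          exact Finset.sum_congr rfl fun l _ => by rw [hAsym l m]; ring
      _ = ∑ l, C l * (∑ m, B k m * A m l) := by
          rw [Finset.sum_comm]
          exact Finset.sum_congr rfl fun l _ => by rw [Finset.mul_sum]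
      _ = C k := by
          have h0 : ∀ l, C l * (∑ m, B k m * A m l)
              = C l * (if k = l then (1:ℝ) else 0) := fun l => by rw [hBAd]
          rw [Finset.sum_congr rfl fun l _ => h0 l]
          exact sum_delta_right C k
  have hE : ∀ m, (∑ i, ∑ j, B i j * Hd i j m)
      = -(Tr m) + (D m + ∑ l, C l * A l m) := by
    intro m
    rw [hQ2 m]
    have := hQ1 m
    linarith
  have hMID : ∑ m, B k m * (∑ i, ∑ j, B i j * Hd i j m)
      = -(∑ m, B k m * Tr m) + ((∑ m, B k m * D m) + C k) := by
    calc ∑ m, B k m * (∑ i, ∑ j, B i j * Hd i j m)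
        = ∑ m, (-(B k m * Tr m) + (B k m * D m + B k m * (∑ l, C l * A l m))) := by
          refine Finset.sum_congr rfl fun m _ => ?_
          rw [hE m]; ring
      _ = -(∑ m, B k m * Tr m)
            + ((∑ m, B k m * D m) + ∑ m, B k m * (∑ l, C l * A l m)) := by
          rw [Finset.sum_add_distrib, Finset.sum_add_distrib, Finset.sum_neg_distrib]
      _ = _ := by rw [hCA]
  have hKu0 : Ku ≠ 0 := by rw [hKu]; exact div_ne_zero hdetA hdetG
  have hTr2 : ∀ m, dg m = G.det * (2 * Tr m) := by
    intro m
    rw [hdg m]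
    congr 1
    calc ∑ i, ∑ j, Gi i j * Gd m i j
        = ∑ i, ∑ j, (Gi i j * Γ1 j i m + Gi i j * Γ1 i j m) := by
          refine sum_congr2 _ _ fun i j => ?_
          rw [hGd]; ring
      _ = (∑ i, ∑ j, Gi i j * Γ1 j i m) + (∑ i, ∑ j, Gi i j * Γ1 i j m) :=
          sum_split2 _ _
      _ = 2 * Tr m := by
          have h1 : (∑ i, ∑ j, Gi i j * Γ1 j i m)
              = ∑ i, ∑ j, Gi i j * Γ1 i j m := by
            rw [Finset.sum_comm]
            exact sum_congr2 _ _ fun i j => by rw [hGisym j i]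
          have h2 : Tr m = ∑ i, ∑ j, Gi i j * Γ1 i j m := by
            simp only [hTr]
            calc ∑ j, Γg j j m = ∑ j, ∑ l, Gi j l * Γ1 l j m :=
                  Finset.sum_congr rfl fun j _ => hΓg j j m
              _ = ∑ l, ∑ j, Gi j l * Γ1 l j m := Finset.sum_comm
              _ = ∑ i, ∑ j, Gi i j * Γ1 i j m :=
                  sum_congr2 _ _ fun i j => by rw [hGisym j i]
          rw [h1, h2]; ring
  have hD2 : ∀ m, D m = dh m / A.det := by
    intro m
    have hs : (∑ i, ∑ j, B i j * Hd m i j) = D m := by simp only [hD]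
    rw [hdh m, hs, mul_comm, mul_div_assoc, div_self hdetA, mul_one]
  have hQ5 : ∀ m, Tr m - (1/2) * D m = -(1/(2*Ku)) * dK m := by
    intro m
    have hTrm : Tr m = dg m / (2 * G.det) := by
      rw [hTr2 m]
      field_simp
    rw [hD2 m, hTrm, hdK m, hKu]
    field_simp
    ring
  have hsplit0 : ∀ i j : Fin n, B i j * (Γg k i j -
        (1/2) * ∑ m, B k m * (Hd i j m + Hd j i m - Hd m i j))
      = B i j * Γg k i j - B i j *
        ((1/2) * ∑ m, B k m * (Hd i j m + Hd j i m - Hd m i j)) := fun i j => by ring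
  calc ∑ i, ∑ j, B i j * (Γg k i j -
        (1/2) * ∑ m, B k m * (Hd i j m + Hd j i m - Hd m i j))
      = C k - ∑ i, ∑ j, B i j *
          ((1/2) * ∑ m, B k m * (Hd i j m + Hd j i m - Hd m i j)) := by
        rw [sum_congr2 _ _ hsplit0, sum_split2sub]
    _ = C k - ((∑ m, B k m * (∑ i, ∑ j, B i j * Hd i j m))
          - (1/2) * ∑ m, B k m * D m) := by rw [hQ3]
    _ = C k - ((-(∑ m, B k m * Tr m) + ((∑ m, B k m * D m) + C k))
          - (1/2) * ∑ m, B k m * D m) := by rw [hMID]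
    _ = (∑ m, B k m * Tr m) - (1/2) * (∑ m, B k m * D m) := by ring
    _ = ∑ m, B k m * (Tr m - (1/2) * D m) := by
        rw [Finset.mul_sum, ← Finset.sum_sub_distrib]
        exact Finset.sum_congr rfl fun m _ => by ring
    _ = ∑ m, B k m * (-(1/(2*Ku)) * dK m) :=
        Finset.sum_congr rfl fun m _ => by rw [hQ5 m]
    _ = -(1/(2*Ku)) * ∑ i, B i k * dK i := by
        rw [Finset.mul_sum]
        exact Finset.sum_congr rfl fun m _ => by rw [hBsym m k]; ring



lemma differentiableAt_det {M : EuclideanSpace ℝ (Fin n) → Matrix (Fin p) (Fin p) ℝ}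
    (hM : ∀ i j, DifferentiableAt ℝ (fun v => M v i j) u) :
    DifferentiableAt ℝ (fun v => (M v).det) u := by
  have hre : (fun v => (M v).det)
      = fun v => ∑ σ : Equiv.Perm (Fin p), (Equiv.Perm.sign σ : ℝ) * ∏ i, M v (σ i) i :=
    funext fun v => by
      rw [Matrix.det_apply]
      exact Finset.sum_congr rfl fun σ _ => by simp [Units.smul_def, zsmul_eq_mul]
  rw [hre]
  exact DifferentiableAt.fun_sum fun σ _ =>
    ((HasFDerivAt.finset_prod (fun i _ => (hM (σ i) i).hasFDerivAt)).differentiableAt).const_mul _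

end Helpers
open scoped Matrix
section MoreHelpers
variable {n : ℕ}

lemma sum_split2v {M : Type*} [AddCommMonoid M] (f g : Fin n → Fin n → M) :
    ∑ i, ∑ j, (f i j + g i j) = (∑ i, ∑ j, f i j) + ∑ i, ∑ j, g i j := by
  rw [← Finset.sum_add_distrib]
  exact Finset.sum_congr rfl fun i _ => Finset.sum_add_distrib

lemma sum_smul2 {M : Type*} [AddCommMonoid M] [Module ℝ M] (c : Fin n → Fin n → ℝ) (v : M) :
    ∑ i, ∑ j, (c i j) • v = (∑ i, ∑ j, c i j) • v := by
  rw [Finset.sum_smul]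
  exact Finset.sum_congr rfl fun i _ => by rw [Finset.sum_smul]

end MoreHelpers

/-- for a C³ hypersurface immersion `x̄ : U → ℝ^{n+1}` with
nowhere-zero Gaussian curvature `K = det h / det g`, second fundamental form
`h_{ij} = ⟨ξ̄, x̄_{/ij}⟩` and unit normal `ξ̄`, the second Beltrami operator of
`II` applied to the position vector satisfies
`Δ^{II}x̄ = −(1/(2K))·∇^{II}(K, x̄) + n·ξ̄`, with
`∇^{II}(K, x̄) = h^{ij} K_{/i} x̄_{/j}` and
`Δ^{II}x̄ = h^{ij}(x̄_{/ij} − {}^{II}Γ^k_{ij} x̄_{/k})`. -/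
theorem beltrami_II_position {n : ℕ} (hn : 0 < n)
    (U : Set (EuclideanSpace ℝ (Fin n))) (hUo : IsOpen U)
    (x ξ : EuclideanSpace ℝ (Fin n) → EuclideanSpace ℝ (Fin (n + 1)))
    (hx : ContDiffOn ℝ 3 x U) (hξ : ContDiffOn ℝ 2 ξ U)
    (g h hinv : EuclideanSpace ℝ (Fin n) → Matrix (Fin n) (Fin n) ℝ)
    (K : EuclideanSpace ℝ (Fin n) → ℝ)
    (hg : ∀ u ∈ U, ∀ i j, g u i j = ⟪pdv x i u, pdv x j u⟫)
    (hh : ∀ u ∈ U, ∀ i j, h u i j = ⟪ξ u, pdv (pdv x i) j u⟫)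
    (hξo : ∀ u ∈ U, ∀ i, ⟪ξ u, pdv x i u⟫ = 0)
    (hξn : ∀ u ∈ U, ‖ξ u‖ = 1)
    (hgdet : ∀ u ∈ U, (g u).det ≠ 0)
    (hhinv : ∀ u ∈ U, h u * hinv u = 1)
    (hK : ∀ u ∈ U, K u = (h u).det / (g u).det)
    (hK0 : ∀ u ∈ U, K u ≠ 0) :
    ∀ u ∈ U,
      (∑ i, ∑ j, hinv u i j •
          (pdv (pdv x i) j u - ∑ k, christoffel h hinv u k i j • pdv x k u))
        = (-(1 / (2 * K u))) •
            (∑ i, ∑ j, (hinv u i j * pd K i u) • pdv x j u)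
          + (n : ℝ) • ξ u := by
  intro u hu
  classical
  have hmem : U ∈ nhds u := hUo.mem_nhds hu
  -- differentiability bookkeeping
  have hx3 : ContDiffOn ℝ ((2:ℕ)+1) x U := by exact_mod_cast hx
  have d1 : ∀ i, ContDiffOn ℝ (2:ℕ) (pdv x i) U := fun i => pdv_contDiffOn hx3 hUo i
  have d1' : ∀ i, ContDiffOn ℝ ((1:ℕ)+1) (pdv x i) U := fun i => by exact_mod_cast d1 i
  have d2 : ∀ i j, ContDiffOn ℝ (1:ℕ) (pdv (pdv x i) j) U := fun i j =>
    pdv_contDiffOn (d1' i) hUo j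
  have dxiAt : ∀ i, DifferentiableAt ℝ (pdv x i) u := fun i =>
    ((d1 i).contDiffAt hmem).differentiableAt (by norm_num)
  have dxijAt : ∀ i j, DifferentiableAt ℝ (pdv (pdv x i) j) u := fun i j =>
    ((d2 i j).contDiffAt hmem).differentiableAt (by norm_num)
  have dξAt : DifferentiableAt ℝ ξ u :=
    (hξ.contDiffAt hmem).differentiableAt (by norm_num)
  have hx2 : ContDiffOn ℝ 2 x U := hx.of_le (by norm_num)
  have d1two : ∀ i, ContDiffOn ℝ 2 (pdv x i) U := fun i => by exact_mod_cast d1 i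
  -- symmetries of derivatives
  have symxU : ∀ v ∈ U, ∀ i j, pdv (pdv x i) j v = pdv (pdv x j) i v :=
    fun v hv i j => pdv_symm hx2 hUo hv i j
  have sym3a : ∀ i j m, pdv (pdv (pdv x i) j) m u = pdv (pdv (pdv x i) m) j u :=
    fun i j m => pdv_symm (d1two i) hUo hu j m
  have sym3b : ∀ i j m, pdv (pdv (pdv x i) j) m u = pdv (pdv (pdv x j) i) m u :=
    fun i j m => pdv_congr_on hUo hu (fun v hv => symxU v hv i j)
  -- basic pointwise identities
  have hAe : ∀ i j, h u i j = ⟪ξ u, pdv (pdv x i) j u⟫ := hh u hu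
  have hGe : ∀ i j, g u i j = ⟪pdv x i u, pdv x j u⟫ := hg u hu
  have hAsym : ∀ i j, h u i j = h u j i := fun i j => by
    rw [hAe i j, hAe j i, symxU u hu i j]
  have hGsym : ∀ i j, g u i j = g u j i := fun i j => by
    rw [hGe i j, hGe j i, real_inner_comm]
  have hdetG : (g u).det ≠ 0 := hgdet u hu
  have hABm : h u * hinv u = 1 := hhinv u hu
  have hBAm : hinv u * h u = 1 := mul_eq_one_comm.mp hABm
  have hdetA : (h u).det ≠ 0 := by
    intro h0
    have h1 : (h u).det * (hinv u).det = 1 := by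
      rw [← Matrix.det_mul, hABm, Matrix.det_one]
    rw [h0, zero_mul] at h1
    exact zero_ne_one h1
  have hBeq : (h u)⁻¹ = hinv u := Matrix.inv_eq_right_inv hABm
  have hATr : (h u)ᵀ = h u := Matrix.ext fun i j => by
    rw [Matrix.transpose_apply]; exact hAsym j i
  have hBsym : ∀ i j, hinv u i j = hinv u j i := by
    have hBT : (hinv u)ᵀ = hinv u := by
      rw [← hBeq, Matrix.transpose_nonsing_inv, hATr]
    intro i j
    conv_lhs => rw [← hBT]
    simp
  have hGGi : g u * (g u)⁻¹ = 1 := Matrix.mul_nonsing_inv _ (isUnit_iff_ne_zero.mpr hdetG)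
  have hGTr : (g u)ᵀ = g u := Matrix.ext fun i j => by
    rw [Matrix.transpose_apply]; exact hGsym j i
  have hGisym : ∀ i j, (g u)⁻¹ i j = (g u)⁻¹ j i := by
    have hGiT : ((g u)⁻¹)ᵀ = (g u)⁻¹ := by
      rw [Matrix.transpose_nonsing_inv, hGTr]
    intro i j
    conv_lhs => rw [← hGiT]
    simp
  -- derivative of the metric g
  have hGd : ∀ m i j, pd (fun v => g v i j) m u
      = ⟪pdv (pdv x i) m u, pdv x j u⟫ + ⟪pdv (pdv x j) m u, pdv x i u⟫ := by
    intro m i j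
    rw [pd_congr_on hUo hu (fun v hv => hg v hv i j), pd_inner (dxiAt i) (dxiAt j)]
    rw [real_inner_comm (pdv x i u)]
  -- ⟪ξ', ξ⟫ = 0
  have hξself : ∀ m, ⟪pdv ξ m u, ξ u⟫ = 0 := by
    intro m
    have h1 : pd (fun v => ⟪ξ v, ξ v⟫) m u = 0 := by
      rw [pd_congr_on hUo hu (f := fun v => ⟪ξ v, ξ v⟫) (g := fun _ => (1:ℝ))
        (fun v hv => by
          show ⟪ξ v, ξ v⟫ = (1:ℝ)
          rw [real_inner_self_eq_norm_mul_norm, hξn v hv]; norm_num)]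
      simp [pd]
    have h2 := pd_inner (u := u) (i := m) dξAt dξAt
    rw [h1] at h2
    have h3 := real_inner_comm (pdv ξ m u) (ξ u)
    linarith
  -- Weingarten-type identity
  have hWein : ∀ m l, ⟪pdv ξ m u, pdv x l u⟫ = -(h u l m) := by
    intro m l
    have h1 : pd (fun v => ⟪ξ v, pdv x l v⟫) m u = 0 := by
      rw [pd_congr_on hUo hu (f := fun v => ⟪ξ v, pdv x l v⟫) (g := fun _ => (0:ℝ))
        (fun v hv => hξo v hv l)]
      simp [pd]
    have h2 := pd_inner (u := u) (i := m) dξAt (dxiAt l)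
    rw [h1] at h2
    have h3 : ⟪ξ u, pdv (pdv x l) m u⟫ = h u l m := (hAe l m).symm
    linarith
  -- derivative of h via inner products
  have hHdinner : ∀ m i j, pd (fun v => h v i j) m u
      = ⟪pdv ξ m u, pdv (pdv x i) j u⟫ + ⟪ξ u, pdv (pdv (pdv x i) j) m u⟫ := by
    intro m i j
    rw [pd_congr_on hUo hu (fun v hv => hh v hv i j), pd_inner dξAt (dxijAt i j)]
  -- Gauss decomposition
  have hGauss : ∀ i j, pdv (pdv x i) j u
      = (∑ k, (∑ m, (g u)⁻¹ k m * ⟪pdv (pdv x i) j u, pdv x m u⟫) • pdv x k u)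
        + h u i j • ξ u := by
    intro i j
    have hwe : ∀ l, ⟪pdv x l u,
        pdv (pdv x i) j u - ((∑ k, (∑ m, (g u)⁻¹ k m *
          ⟪pdv (pdv x i) j u, pdv x m u⟫) • pdv x k u) + h u i j • ξ u)⟫ = 0 := by
      intro l
      rw [inner_sub_right, inner_add_right, inner_sum]
      simp only [inner_smul_right]
      rw [show ⟪pdv x l u, ξ u⟫ = (0:ℝ) from by
        rw [real_inner_comm]; exact hξo u hu l]
      rw [mul_zero, add_zero, sub_eq_zero]
      have hcontr : ∑ k, (∑ m, (g u)⁻¹ k m * ⟪pdv (pdv x i) j u, pdv x m u⟫)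
            * ⟪pdv x l u, pdv x k u⟫
          = ⟪pdv (pdv x i) j u, pdv x l u⟫ := by
        calc ∑ k, (∑ m, (g u)⁻¹ k m * ⟪pdv (pdv x i) j u, pdv x m u⟫)
              * ⟪pdv x l u, pdv x k u⟫
            = ∑ k, ∑ m, (g u l k * (g u)⁻¹ k m) * ⟪pdv (pdv x i) j u, pdv x m u⟫ := by
              refine Finset.sum_congr rfl fun k _ => ?_
              rw [Finset.sum_mul, ← hGe l k]
              exact Finset.sum_congr rfl fun m _ => by ring
          _ = ∑ m, (∑ k, g u l k * (g u)⁻¹ k m) * ⟪pdv (pdv x i) j u, pdv x m u⟫ := by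
              rw [Finset.sum_comm]
              exact Finset.sum_congr rfl fun m _ => by rw [Finset.sum_mul]
          _ = ∑ m, (if l = m then (1:ℝ) else 0) * ⟪pdv (pdv x i) j u, pdv x m u⟫ := by
              refine Finset.sum_congr rfl fun m _ => ?_
              rw [← Matrix.mul_apply, hGGi, Matrix.one_apply]
          _ = ⟪pdv (pdv x i) j u, pdv x l u⟫ := by simp
      rw [hcontr, real_inner_comm]
    have hwξ : ⟪ξ u,
        pdv (pdv x i) j u - ((∑ k, (∑ m, (g u)⁻¹ k m *
          ⟪pdv (pdv x i) j u, pdv x m u⟫) • pdv x k u) + h u i j • ξ u)⟫ = 0 := by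
      rw [inner_sub_right, inner_add_right, inner_sum]
      simp only [inner_smul_right]
      rw [Finset.sum_eq_zero (fun k _ => by rw [hξo u hu k, mul_zero])]
      rw [show ⟪ξ u, ξ u⟫ = (1:ℝ) from by
        rw [real_inner_self_eq_norm_mul_norm, hξn u hu]; norm_num]
      rw [← hAe i j]
      ring
    have h0 := frame_eq_zero (fun k => pdv x k u) (ξ u) (g u) hGe hdetG
      (fun l => hξo u hu l) (hξn u hu) _ hwe hwξ
    exact sub_eq_zero.mp h0
  -- full formula for ∂h
  have hHdfull : ∀ m i j, pd (fun v => h v i j) m u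
      = -(∑ l, (∑ m', (g u)⁻¹ l m' * ⟪pdv (pdv x i) j u, pdv x m' u⟫) * h u l m)
        + ⟪ξ u, pdv (pdv (pdv x i) j) m u⟫ := by
    intro m i j
    rw [hHdinner m i j]
    congr 1
    conv_lhs => rw [hGauss i j]
    rw [inner_add_right, inner_sum]
    simp only [inner_smul_right]
    rw [hξself m, mul_zero, add_zero, ← Finset.sum_neg_distrib]
    refine Finset.sum_congr rfl fun l _ => ?_
    rw [hWein m l]
    ring
  -- adjugates
  have hadjA : ∀ i q, (h u).adjugate i q = (h u).det * hinv u i q := by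
    intro i q
    have h2 : hinv u i q = ((h u).det)⁻¹ * (h u).adjugate i q := by
      rw [← hBeq, Matrix.inv_def]
      simp [Ring.inverse_eq_inv']
    rw [h2]
    field_simp
  have hadjG : ∀ i q, (g u).adjugate i q = (g u).det * (g u)⁻¹ i q := by
    intro i q
    have h2 : (g u)⁻¹ i q = ((g u).det)⁻¹ * (g u).adjugate i q := by
      rw [Matrix.inv_def]
      simp [Ring.inverse_eq_inv']
    rw [h2]
    field_simp
  -- symmetry of entries as functions on U
  have hHdsym : ∀ m i j, pd (fun v => h v i j) m u = pd (fun v => h v j i) m u :=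
    fun m i j => pd_congr_on hUo hu (fun v hv => by
      rw [hh v hv i j, hh v hv j i, symxU v hv i j])
  have hGdsym : ∀ m i j, pd (fun v => g v i j) m u = pd (fun v => g v j i) m u :=
    fun m i j => pd_congr_on hUo hu (fun v hv => by
      rw [hg v hv i j, hg v hv j i, real_inner_comm])
  -- differentiability of entries & determinants
  have hdiffh : ∀ i j, DifferentiableAt ℝ (fun v => h v i j) u := fun i j =>
    (Filter.eventuallyEq_of_mem hmem (fun v hv => hh v hv i j)).differentiableAt_iff.mpr
      (dξAt.inner ℝ (dxijAt i j))
  have hdiffg : ∀ i j, DifferentiableAt ℝ (fun v => g v i j) u := fun i j =>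
    (Filter.eventuallyEq_of_mem hmem (fun v hv => hg v hv i j)).differentiableAt_iff.mpr
      ((dxiAt i).inner ℝ (dxiAt j))
  have hdiffdeth : DifferentiableAt ℝ (fun v => (h v).det) u := differentiableAt_det hdiffh
  have hdiffdetg : DifferentiableAt ℝ (fun v => (g v).det) u := differentiableAt_det hdiffg
  -- Jacobi formulas
  have hdh : ∀ m, pd (fun v => (h v).det) m u
      = (h u).det * ∑ i, ∑ j, hinv u i j * pd (fun v => h v i j) m u := by
    intro m
    rw [pd_det hdiffh m]
    calc ∑ i, ∑ q, (h u).adjugate i q * pd (fun v => h v q i) m u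
        = ∑ i, ∑ q, (h u).det * (hinv u i q * pd (fun v => h v i q) m u) := by
          refine Finset.sum_congr rfl fun i _ => Finset.sum_congr rfl fun q _ => ?_
          rw [hadjA i q, hHdsym m q i]
          ring
      _ = (h u).det * ∑ i, ∑ j, hinv u i j * pd (fun v => h v i j) m u :=
          sum_pull2 _ _
  have hdg : ∀ m, pd (fun v => (g v).det) m u
      = (g u).det * ∑ i, ∑ j, (g u)⁻¹ i j * pd (fun v => g v i j) m u := by
    intro m
    rw [pd_det hdiffg m]
    calc ∑ i, ∑ q, (g u).adjugate i q * pd (fun v => g v q i) m u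
        = ∑ i, ∑ q, (g u).det * ((g u)⁻¹ i q * pd (fun v => g v i q) m u) := by
          refine Finset.sum_congr rfl fun i _ => Finset.sum_congr rfl fun q _ => ?_
          rw [hadjG i q, hGdsym m q i]
          ring
      _ = (g u).det * ∑ i, ∑ j, (g u)⁻¹ i j * pd (fun v => g v i j) m u :=
          sum_pull2 _ _
  -- derivative of K
  have hKdiff : DifferentiableAt ℝ K u :=
    (Filter.eventuallyEq_of_mem hmem (fun v hv => hK v hv)).differentiableAt_iff.mpr
      (by
        have hinv' : DifferentiableAt ℝ (fun t : ℝ => t⁻¹) ((g u).det) :=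
          differentiableAt_inv hdetG
        have h2 : DifferentiableAt ℝ (fun v => ((g v).det)⁻¹) u :=
          hinv'.comp u hdiffdetg
        have h3 := hdiffdeth.mul h2
        have h4 : (fun v => (h v).det * ((g v).det)⁻¹)
            = fun v => (h v).det / (g v).det := by
          funext v; rw [div_eq_mul_inv]
        rw [← h4]
        exact h3)
  have hdKfact : ∀ m, pd K m u
      = (pd (fun v => (h v).det) m u - K u * pd (fun v => (g v).det) m u) / (g u).det := by
    intro m
    have h1 : pd (fun v => (h v).det) m u = pd (fun v => K v * (g v).det) m u :=
      pd_congr_on hUo hu (fun v hv => by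
        rw [hK v hv, div_mul_cancel₀ _ (hgdet v hv)])
    have h2 : pd (fun v => K v * (g v).det) m u
        = pd K m u * (g u).det + K u * pd (fun v => (g v).det) m u :=
      pd_mul hKdiff hdiffdetg
    rw [eq_div_iff hdetG]
    rw [h1, h2]
    ring
  -- the key scalar identity
  have key : ∀ k, ∑ i, ∑ j, hinv u i j *
        ((∑ m, (g u)⁻¹ k m * ⟪pdv (pdv x i) j u, pdv x m u⟫)
          - (1/2) * ∑ m, hinv u k m *
            (pd (fun v => h v j m) i u + pd (fun v => h v i m) j u
              - pd (fun v => h v i j) m u))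
      = -(1/(2 * K u)) * ∑ i, hinv u i k * pd K i u := by
    intro k
    exact scalar_main (h u) (hinv u) (g u) (g u)⁻¹
      (fun m i j => ⟪pdv (pdv x i) j u, pdv x m u⟫)
      (fun i j m => ⟪ξ u, pdv (pdv (pdv x i) j) m u⟫)
      (fun m i j => pd (fun v => h v i j) m u)
      (fun m i j => pd (fun v => g v i j) m u)
      (fun k i j => ∑ m, (g u)⁻¹ k m * ⟪pdv (pdv x i) j u, pdv x m u⟫)
      (fun m => pd (fun v => (h v).det) m u)
      (fun m => pd (fun v => (g v).det) m u)
      (fun m => pd K m u) (K u)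
      hABm hBAm hAsym hBsym hGisym (fun k i j => rfl)
      hGd hHdfull
      (fun a b c => by
        show ⟪ξ u, pdv (pdv (pdv x a) b) c u⟫ = ⟪ξ u, pdv (pdv (pdv x b) a) c u⟫
        rw [sym3b a b c])
      (fun a b c => by
        show ⟪ξ u, pdv (pdv (pdv x a) b) c u⟫ = ⟪ξ u, pdv (pdv (pdv x a) c) b u⟫
        rw [sym3a a b c])
      hdh hdg hdetA hdetG (hK u hu) hdKfact k
  -- trace identity
  have htrace : ∑ i, ∑ j, hinv u i j * h u i j = (n : ℝ) := by
    calc ∑ i, ∑ j, hinv u i j * h u i j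
        = ∑ i, ∑ j, hinv u i j * h u j i :=
          sum_congr2 _ _ fun i j => by rw [hAsym i j]
      _ = ∑ i, (hinv u * h u) i i :=
          Finset.sum_congr rfl fun i _ => (Matrix.mul_apply).symm
      _ = (n : ℝ) := by
          have h1 : ∀ i : Fin n, (hinv u * h u) i i = 1 := fun i => by
            rw [hBAm, Matrix.one_apply_eq]
          rw [Finset.sum_congr rfl fun i _ => h1 i]
          simp
  -- christoffel unfolding
  have hchris : ∀ k i j, christoffel h hinv u k i j
      = (1/2) * ∑ m, hinv u k m *
          (pd (fun v => h v j m) i u + pd (fun v => h v i m) j u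
            - pd (fun v => h v i j) m u) := fun k i j => rfl
  -- final assembly
  calc ∑ i, ∑ j, hinv u i j •
        (pdv (pdv x i) j u - ∑ k, christoffel h hinv u k i j • pdv x k u)
      = ∑ i, ∑ j, ((∑ k, (hinv u i j *
            ((∑ m, (g u)⁻¹ k m * ⟪pdv (pdv x i) j u, pdv x m u⟫)
              - christoffel h hinv u k i j)) • pdv x k u)
          + (hinv u i j * h u i j) • ξ u) := by
        refine Finset.sum_congr rfl fun i _ => Finset.sum_congr rfl fun j _ => ?_
        conv_lhs => rw [hGauss i j]
        symm
        calc (∑ k, (hinv u i j *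
              ((∑ m, (g u)⁻¹ k m * ⟪pdv (pdv x i) j u, pdv x m u⟫)
                - christoffel h hinv u k i j)) • pdv x k u)
            + (hinv u i j * h u i j) • ξ u
            = hinv u i j • ((∑ k,
                ((∑ m, (g u)⁻¹ k m * ⟪pdv (pdv x i) j u, pdv x m u⟫) • pdv x k u
                  - christoffel h hinv u k i j • pdv x k u)) + h u i j • ξ u) := by
              rw [smul_add, Finset.smul_sum, smul_smul]
              congr 1
              refine Finset.sum_congr rfl fun k _ => ?_
              rw [smul_sub, smul_smul, smul_smul, ← sub_smul, ← mul_sub]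
          _ = hinv u i j • (((∑ k, (∑ m, (g u)⁻¹ k m *
                ⟪pdv (pdv x i) j u, pdv x m u⟫) • pdv x k u) + h u i j • ξ u)
                - ∑ k, christoffel h hinv u k i j • pdv x k u) := by
              congr 1
              rw [Finset.sum_sub_distrib]
              abel
    _ = (∑ k, (∑ i, ∑ j, hinv u i j *
          ((∑ m, (g u)⁻¹ k m * ⟪pdv (pdv x i) j u, pdv x m u⟫)
            - christoffel h hinv u k i j)) • pdv x k u)
        + (∑ i, ∑ j, hinv u i j * h u i j) • ξ u := by
        rw [sum_split2v]
        congr 1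
        · rw [sum_comm3]
          refine Finset.sum_congr rfl fun k _ => ?_
          exact sum_smul2 _ _
        · exact sum_smul2 _ _
    _ = (∑ k, (-(1/(2 * K u)) * ∑ i, hinv u i k * pd K i u) • pdv x k u)
        + (n : ℝ) • ξ u := by
        rw [htrace]
        congr 1
        refine Finset.sum_congr rfl fun k _ => ?_
        rw [← key k]
        rfl
    _ = (-(1 / (2 * K u))) • (∑ i, ∑ j, (hinv u i j * pd K i u) • pdv x j u)
        + (n : ℝ) • ξ u := by
        congr 1
        symm
        calc (-(1 / (2 * K u))) • (∑ i, ∑ j, (hinv u i j * pd K i u) • pdv x j u)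
            = ∑ i, ∑ j, (-(1/(2 * K u)) * (hinv u i j * pd K i u)) • pdv x j u := by
              rw [Finset.smul_sum]
              refine Finset.sum_congr rfl fun i _ => ?_
              rw [Finset.smul_sum]
              exact Finset.sum_congr rfl fun j _ => by rw [smul_smul]
          _ = ∑ j, ∑ i, (-(1/(2 * K u)) * (hinv u i j * pd K i u)) • pdv x j u :=
              Finset.sum_comm
          _ = ∑ k, (-(1/(2 * K u)) * ∑ i, hinv u i k * pd K i u) • pdv x k u := by
              refine Finset.sum_congr rfl fun j _ => ?_
              rw [Finset.mul_sum, Finset.sum_smul]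
end

section
/- The Tchebychev vector field of any relative normalization is a gradient with respect to the relative metric: T̄ = ∇^G(ln φ, x̄) with φ = |K|^{−1/(2n)}·|q|^{(n+2)/(2n)}; equivalently, the 1-form G(T̄, ·) obtained by lowering the index of T̄ with the relative metric G equals d(ln φ), and is therefore closed (T̄ is irrotational with respect to G). -/
open scoped RealInnerProductSpace

open Matrix in
lemma smul_gradIII {n : ℕ} (c : ℝ)
    (hinv : EuclideanSpace ℝ (Fin n) → Matrix (Fin n) (Fin n) ℝ)
    (x : EuclideanSpace ℝ (Fin n) → EuclideanSpace ℝ (Fin (n + 1)))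
    (f : EuclideanSpace ℝ (Fin n) → ℝ) (u : EuclideanSpace ℝ (Fin n)) :
    c • gradIII hinv x f u
      = ∑ i, ∑ j, (-(c * (hinv u i j * pd f i u))) • pdv x j u := by
  simp only [gradIII, smul_neg, Finset.smul_sum, smul_smul, neg_smul,
    ← Finset.sum_neg_distrib]


/-- the Tchebychev field
`T̄ = (q/(2nK))∇^{III}(K, ξ̄) − ((n+2)/(2n))∇^{III}(q, ξ̄)` of any relative
normalization is a `G`-gradient: `T̄ = ∇^G(ln φ, x̄)` with
`φ = |K|^{−1/(2n)}·|q|^{(n+2)/(2n)}` and `G^{ij} = q·h^{ij}`; equivalently,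
the 1-form `ωᵢ = G_{ij}T^j` obtained by lowering the index of `T̄ = T^j x̄_{/j}`
with `G_{ij} = q^{-1}h_{ij}` equals `d(ln φ)`, and is therefore closed
(`∂_j ωᵢ = ∂ᵢ ω_j`): `T̄` is irrotational with respect to `G`. -/
theorem tchebychev_is_G_gradient {n : ℕ} (hn : 0 < n)
    (U : Set (EuclideanSpace ℝ (Fin n))) (hUo : IsOpen U)
    (x ξ : EuclideanSpace ℝ (Fin n) → EuclideanSpace ℝ (Fin (n + 1)))
    (h hinv : EuclideanSpace ℝ (Fin n) → Matrix (Fin n) (Fin n) ℝ)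
    (K q : EuclideanSpace ℝ (Fin n) → ℝ)
    (φ : EuclideanSpace ℝ (Fin n) → ℝ)
    (hφ : ∀ u, φ u = |K u| ^ (-(1 / (2 * (n : ℝ)))) *
        |q u| ^ (((n : ℝ) + 2) / (2 * (n : ℝ))))
    (hind : ∀ u ∈ U, LinearIndependent ℝ (fun j : Fin n => pdv x j u))
    (hsymm : ∀ u ∈ U, (h u).IsSymm)
    (hhinv : ∀ u ∈ U, h u * hinv u = 1)
    (hK : ContDiffOn ℝ 2 K U) (hK0 : ∀ u ∈ U, K u ≠ 0)
    (hq : ContDiffOn ℝ 2 q U) (hq0 : ∀ u ∈ U, q u ≠ 0)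
    -- `Tcomp` gives the components of `T̄` in the tangent basis:
    (Tcomp : EuclideanSpace ℝ (Fin n) → Fin n → ℝ)
    (hTcomp : ∀ u ∈ U, tcheb hinv x K q u = ∑ j, Tcomp u j • pdv x j u) :
    (∀ u ∈ U, tcheb hinv x K q u
        = ∑ i, ∑ j, (q u * hinv u i j *
            pd (fun v => Real.log (φ v)) i u) • pdv x j u) ∧
    (∀ u ∈ U, ∀ i, (∑ j, (q u)⁻¹ * h u i j * Tcomp u j)
        = pd (fun v => Real.log (φ v)) i u) ∧
    (∀ u ∈ U, ∀ i j,
      pd (fun v => ∑ k, (q v)⁻¹ * h v i k * Tcomp v k) j u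
        = pd (fun v => ∑ k, (q v)⁻¹ * h v j k * Tcomp v k) i u) := by
  have hn0 : (n : ℝ) ≠ 0 := Nat.cast_ne_zero.2 hn.ne'
  set L : EuclideanSpace ℝ (Fin n) → ℝ := fun v => Real.log (φ v) with hL
  set F : EuclideanSpace ℝ (Fin n) → ℝ := fun v =>
    -(1 / (2 * (n : ℝ))) * Real.log (K v)
      + (((n : ℝ) + 2) / (2 * (n : ℝ))) * Real.log (q v) with hF
  have hmem : ∀ u ∈ U, U ∈ nhds u := fun u hu => hUo.mem_nhds hu
  have hFeq : ∀ u ∈ U, L =ᶠ[nhds u] F := by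
    intro u hu
    have hKc : ContinuousAt K u := (hK.contDiffAt (hmem u hu)).continuousAt
    have hqc : ContinuousAt q u := (hq.contDiffAt (hmem u hu)).continuousAt
    filter_upwards [hKc.eventually_ne (hK0 u hu), hqc.eventually_ne (hq0 u hu)]
      with v hKv hqv
    have h1 : (0:ℝ) < |K v| := abs_pos.2 hKv
    have h2 : (0:ℝ) < |q v| := abs_pos.2 hqv
    simp only [hL, hF, hφ v]
    rw [Real.log_mul (Real.rpow_pos_of_pos h1 _).ne' (Real.rpow_pos_of_pos h2 _).ne',
      Real.log_rpow h1, Real.log_rpow h2, Real.log_abs, Real.log_abs]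
  have hFC : ∀ u ∈ U, ContDiffAt ℝ 2 F u := by
    intro u hu
    exact (contDiffAt_const.mul ((hK.contDiffAt (hmem u hu)).log (hK0 u hu))).add
      (contDiffAt_const.mul ((hq.contDiffAt (hmem u hu)).log (hq0 u hu)))
  have hLC : ∀ u ∈ U, ContDiffAt ℝ 2 L u := fun u hu =>
    (hFC u hu).congr_of_eventuallyEq (hFeq u hu)
  have key : ∀ u ∈ U, ∀ i, pd L i u
      = -(1 / (2 * (n : ℝ))) * (pd K i u / K u)
        + (((n : ℝ) + 2) / (2 * (n : ℝ))) * (pd q i u / q u) := by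
    intro u hu i
    have hKd : HasFDerivAt K (fderiv ℝ K u) u :=
      ((hK.contDiffAt (hmem u hu)).differentiableAt (by norm_num)).hasFDerivAt
    have hqd : HasFDerivAt q (fderiv ℝ q u) u :=
      ((hq.contDiffAt (hmem u hu)).differentiableAt (by norm_num)).hasFDerivAt
    have hFd : HasFDerivAt F
        ((-(1 / (2 * (n : ℝ)))) • ((K u)⁻¹ • fderiv ℝ K u)
          + ((((n : ℝ) + 2) / (2 * (n : ℝ)))) • ((q u)⁻¹ • fderiv ℝ q u)) u :=
      ((hKd.log (hK0 u hu)).const_mul _).add ((hqd.log (hq0 u hu)).const_mul _)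
    rw [pd, Filter.EventuallyEq.fderiv_eq (hFeq u hu), hFd.fderiv]
    simp only [ContinuousLinearMap.add_apply, ContinuousLinearMap.coe_smul',
      Pi.smul_apply, smul_eq_mul, pd]
    ring
  have claim1 : ∀ u ∈ U, tcheb hinv x K q u
      = ∑ i, ∑ j, (q u * hinv u i j * pd L i u) • pdv x j u := by
    intro u hu
    have hK0' := hK0 u hu
    have hq0' := hq0 u hu
    rw [tcheb, smul_gradIII, smul_gradIII, ← Finset.sum_sub_distrib]
    refine Finset.sum_congr rfl fun i _ => ?_
    rw [← Finset.sum_sub_distrib]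
    refine Finset.sum_congr rfl fun j _ => ?_
    rw [← sub_smul]
    congr 1
    rw [key u hu i]
    field_simp
    ring
  have hTval : ∀ u ∈ U, ∀ j, Tcomp u j = ∑ i, q u * hinv u i j * pd L i u := by
    intro u hu
    have h1 : ∑ j, Tcomp u j • pdv x j u
        = ∑ j, (∑ i, q u * hinv u i j * pd L i u) • pdv x j u := by
      rw [← hTcomp u hu, claim1 u hu, Finset.sum_comm]
      exact Finset.sum_congr rfl fun j _ => (Finset.sum_smul).symm
    have h2 : ∑ j, (Tcomp u j - ∑ i, q u * hinv u i j * pd L i u) • pdv x j u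
        = 0 := by
      simp only [sub_smul, Finset.sum_sub_distrib, h1, sub_self]
    intro j
    have h3 := Fintype.linearIndependent_iff.1 (hind u hu) _ h2 j
    exact sub_eq_zero.1 h3
  have hinvsymm : ∀ u ∈ U, ∀ i j, hinv u i j = hinv u j i := by
    intro u hu i j
    have e1 : (h u)⁻¹ = hinv u := Matrix.inv_eq_right_inv (hhinv u hu)
    have e2 : Matrix.transpose (hinv u) = hinv u := by
      rw [← e1, Matrix.transpose_nonsing_inv, (hsymm u hu).eq]
    conv_lhs => rw [← e2]
    exact Matrix.transpose_apply _ _ _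
  have claim2 : ∀ u ∈ U, ∀ i,
      (∑ j, (q u)⁻¹ * h u i j * Tcomp u j) = pd L i u := by
    intro u hu i
    have hq0' := hq0 u hu
    calc ∑ j, (q u)⁻¹ * h u i j * Tcomp u j
        = ∑ j, ∑ k, (q u)⁻¹ * h u i j * (q u * hinv u k j * pd L k u) := by
          refine Finset.sum_congr rfl fun j _ => ?_
          rw [hTval u hu j, Finset.mul_sum]
      _ = ∑ k, (∑ j, h u i j * hinv u j k) * pd L k u := by
          rw [Finset.sum_comm]
          refine Finset.sum_congr rfl fun k _ => ?_
          rw [Finset.sum_mul]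
          refine Finset.sum_congr rfl fun j _ => ?_
          rw [hinvsymm u hu k j]
          field_simp
      _ = pd L i u := by
          have e3 : ∀ k, (∑ j, h u i j * hinv u j k)
              = (1 : Matrix (Fin n) (Fin n) ℝ) i k := by
            intro k
            rw [← hhinv u hu, Matrix.mul_apply]
          simp [e3, Matrix.one_apply, ite_mul]
  have claim3 : ∀ u ∈ U, ∀ i j,
      pd (fun v => ∑ k, (q v)⁻¹ * h v i k * Tcomp v k) j u
        = pd (fun v => ∑ k, (q v)⁻¹ * h v j k * Tcomp v k) i u := by
    intro u hu i j
    have heq : ∀ i0 : Fin n,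
        (fun v => ∑ k, (q v)⁻¹ * h v i0 k * Tcomp v k)
          =ᶠ[nhds u] fun v => pd L i0 v := by
      intro i0
      filter_upwards [hmem u hu] with v hv
      exact claim2 v hv i0
    have hC := hLC u hu
    have hfd : DifferentiableAt ℝ (fderiv ℝ L) u :=
      (hC.fderiv_right (m := 1) (by norm_num)).differentiableAt (by norm_num)
    have hsym : IsSymmSndFDerivAt ℝ L u := hC.isSymmSndFDerivAt (by norm_num)
    have hpd : ∀ a b : Fin n, pd (fun v => pd L a v) b u
        = fderiv ℝ (fderiv ℝ L) u (EuclideanSpace.single b 1)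
            (EuclideanSpace.single a 1) := by
      intro a b
      have e4 : (fun v => pd L a v)
          = fun v => (fderiv ℝ L v) (EuclideanSpace.single a 1) := rfl
      rw [pd, e4, fderiv_clm_apply hfd (differentiableAt_const _)]
      simp
    rw [pd, Filter.EventuallyEq.fderiv_eq (heq i), ← pd, hpd i j, hsym, ← hpd j i,
      pd, ← Filter.EventuallyEq.fderiv_eq (heq j), ← pd]
  exact ⟨claim1, claim2, claim3⟩
end
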